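/- arXiv:1704.05306 — 12 statements merged into one kernel-verified Lean document; each statement's English description precedes it below -/
import Mathlib

section
/- Fix (x,t) ∈ ℝ × ℝ and n ≥ 1. Let Q, R : ℝ × ℝ → Matrix (Fin n) (Fin n) ℂ and set W = fromBlocks 0 Q R 0 (a 2n × 2n matrix-valued function) and Σ₃ = fromBlocks 1 0 0 (-1). Assume x ↦ W(x,t) is twice differentiable at x and t ↦ W(x,t) is differentiable at t. For k ∈ ℂ define U(k) = -i k • Σ₃ + W and V(k) = -2 i k² • Σ₃ + 2 k • W - i • (∂ₓW) * Σ₃ - i • W² * Σ₃. Then the zero-curvature condition ∂ₜU(k) - ∂ₓV(k) + U(k) * V(k) - V(k) * U(k) = 0 holds at (x,t) for every k ∈ ℂ if and only if the matrix AKNS equations hold at (x,t): i • ∂ₜQ + ∂ₓ²Q - 2 • Q * R * Q = 0 and -i • ∂ₜR + ∂ₓ²R - 2 • R * Q * R = 0. -/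
set_option linter.unusedSectionVars false

open Matrix Complex

attribute [local instance] Matrix.normedAddCommGroup Matrix.normedSpace

section helpers

variable {m m' p : Type*} [Fintype m] [Fintype m'] [Fintype p]

theorem matrix_hasDerivAt_entry {f : ℝ → Matrix m m' ℂ} {f' : Matrix m m' ℂ} {x : ℝ}
    (hf : HasDerivAt f f' x) (i : m) (j : m') :
    HasDerivAt (fun y => f y i j) (f' i j) x :=
  hasDerivAt_pi.1 (hasDerivAt_pi.1 hf i) j

theorem matrix_hasDerivAt_of_entries {f : ℝ → Matrix m m' ℂ} {f' : Matrix m m' ℂ} {x : ℝ}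
    (h : ∀ i j, HasDerivAt (fun y => f y i j) (f' i j) x) :
    HasDerivAt f f' x :=
  hasDerivAt_pi.2 fun i => hasDerivAt_pi.2 (h i)

theorem matrix_hasDerivAt_mul {f : ℝ → Matrix m m' ℂ} {g : ℝ → Matrix m' p ℂ}
    {f' : Matrix m m' ℂ} {g' : Matrix m' p ℂ} {x : ℝ}
    (hf : HasDerivAt f f' x) (hg : HasDerivAt g g' x) :
    HasDerivAt (fun y => f y * g y) (f' * g x + f x * g') x := by
  apply matrix_hasDerivAt_of_entries
  intro i j
  have : HasDerivAt (fun y => ∑ k, f y i k * g y k j)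
      (∑ k, (f' i k * g x k j + f x i k * g' k j)) x :=
    HasDerivAt.fun_sum fun k _ =>
      (matrix_hasDerivAt_entry hf i k).mul (matrix_hasDerivAt_entry hg k j)
  simpa [Matrix.mul_apply, Matrix.add_apply, Finset.sum_add_distrib] using this

theorem matrix_hasDerivAt_fromBlocks {n : ℕ} {f g : ℝ → Matrix (Fin n) (Fin n) ℂ}
    {f' g' : Matrix (Fin n) (Fin n) ℂ} {x : ℝ}
    (hf : HasDerivAt f f' x) (hg : HasDerivAt g g' x) :
    HasDerivAt (fun y => fromBlocks 0 (f y) (g y) 0) (fromBlocks 0 f' g' 0) x := by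
  apply matrix_hasDerivAt_of_entries
  rintro (i | i) (j | j) <;>
    simp only [Matrix.fromBlocks_apply₁₁, Matrix.fromBlocks_apply₁₂,
      Matrix.fromBlocks_apply₂₁, Matrix.fromBlocks_apply₂₂, Matrix.zero_apply]
  · exact hasDerivAt_const _ _
  · exact matrix_hasDerivAt_entry hf i j
  · exact matrix_hasDerivAt_entry hg i j
  · exact hasDerivAt_const _ _

end helpers

/-- Zero-curvature condition for the 2n×2n AKNS Lax pair is equivalent to the
matrix AKNS equations, at a fixed point (x,t). -/
theorem akns_zero_curvature_iff
    (n : ℕ) (hn : 1 ≤ n)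
    (Q R : ℝ × ℝ → Matrix (Fin n) (Fin n) ℂ)
    (x t : ℝ)
    -- twice differentiability in x (first derivative exists everywhere in x,
    -- and is itself differentiable at x), differentiability in t at t
    (hQx : ∀ y : ℝ, DifferentiableAt ℝ (fun s => Q (s, t)) y)
    (hRx : ∀ y : ℝ, DifferentiableAt ℝ (fun s => R (s, t)) y)
    (hQxx : DifferentiableAt ℝ (deriv fun s => Q (s, t)) x)
    (hRxx : DifferentiableAt ℝ (deriv fun s => R (s, t)) x)
    (hQt : DifferentiableAt ℝ (fun τ => Q (x, τ)) t)
    (hRt : DifferentiableAt ℝ (fun τ => R (x, τ)) t)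
    -- the Lax pair data
    (S3 : Matrix (Fin n ⊕ Fin n) (Fin n ⊕ Fin n) ℂ)
    (hS3 : S3 = fromBlocks 1 0 0 (-1))
    (W : ℝ → ℝ → Matrix (Fin n ⊕ Fin n) (Fin n ⊕ Fin n) ℂ)
    (hW : ∀ s τ : ℝ, W s τ = fromBlocks 0 (Q (s, τ)) (R (s, τ)) 0)
    (U V : ℂ → ℝ → ℝ → Matrix (Fin n ⊕ Fin n) (Fin n ⊕ Fin n) ℂ)
    (hU : ∀ (k : ℂ) (s τ : ℝ), U k s τ = (-(I * k)) • S3 + W s τ)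
    (hV : ∀ (k : ℂ) (s τ : ℝ), V k s τ =
      (-(2 * I * k ^ 2)) • S3 + (2 * k) • W s τ
        - I • (deriv (fun s' => W s' τ) s * S3) - I • (W s τ * W s τ * S3)) :
    (∀ k : ℂ,
      deriv (fun τ => U k x τ) t - deriv (fun s => V k s t) x
        + U k x t * V k x t - V k x t * U k x t = 0)
    ↔
    (I • deriv (fun τ => Q (x, τ)) t + deriv (deriv fun s => Q (s, t)) x
        - (2 : ℂ) • (Q (x, t) * R (x, t) * Q (x, t)) = 0
      ∧ (-I) • deriv (fun τ => R (x, τ)) t + deriv (deriv fun s => R (s, t)) x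
        - (2 : ℂ) • (R (x, t) * Q (x, t) * R (x, t)) = 0) := by
  have hQ' : ∀ s : ℝ, HasDerivAt (fun s' => Q (s', t)) (deriv (fun s' => Q (s', t)) s) s :=
    fun s => (hQx s).hasDerivAt
  have hR' : ∀ s : ℝ, HasDerivAt (fun s' => R (s', t)) (deriv (fun s' => R (s', t)) s) s :=
    fun s => (hRx s).hasDerivAt
  have hWs : ∀ s : ℝ, HasDerivAt (fun s' => W s' t)
      (fromBlocks 0 (deriv (fun s' => Q (s', t)) s) (deriv (fun s' => R (s', t)) s) 0) s := by
    intro s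
    have h := matrix_hasDerivAt_fromBlocks (hQ' s) (hR' s)
    have e : (fun s' => W s' t) = fun s' => fromBlocks 0 (Q (s', t)) (R (s', t)) 0 :=
      funext fun s' => hW s' t
    rw [e]; exact h
  have hderW : (deriv fun s' => W s' t) =
      fun s => fromBlocks 0 (deriv (fun s' => Q (s', t)) s) (deriv (fun s' => R (s', t)) s) 0 :=
    funext fun s => (hWs s).deriv
  have hUt : ∀ k : ℂ, deriv (fun τ => U k x τ) t
      = fromBlocks 0 (deriv (fun τ => Q (x, τ)) t) (deriv (fun τ => R (x, τ)) t) 0 := by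
    intro k
    have h : HasDerivAt (fun τ => U k x τ)
        (0 + fromBlocks 0 (deriv (fun τ => Q (x, τ)) t) (deriv (fun τ => R (x, τ)) t) 0) t := by
      simp only [hU, hW]
      exact (hasDerivAt_const _ _).add
        (matrix_hasDerivAt_fromBlocks hQt.hasDerivAt hRt.hasDerivAt)
    exact h.deriv.trans (zero_add _)
  have hVx : ∀ k : ℂ, HasDerivAt (fun s => V k s t)
      ((0 : Matrix (Fin n ⊕ Fin n) (Fin n ⊕ Fin n) ℂ)
        + (2 * k) • fromBlocks 0 (deriv (fun s' => Q (s', t)) x) (deriv (fun s' => R (s', t)) x) 0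
        - I • (fromBlocks 0 (deriv (deriv fun s => Q (s, t)) x) (deriv (deriv fun s => R (s, t)) x) 0 * S3
            + fromBlocks 0 (deriv (fun s' => Q (s', t)) x) (deriv (fun s' => R (s', t)) x) 0 * 0)
        - I • ((fromBlocks 0 (deriv (fun s' => Q (s', t)) x) (deriv (fun s' => R (s', t)) x) 0 * W x t
              + W x t * fromBlocks 0 (deriv (fun s' => Q (s', t)) x) (deriv (fun s' => R (s', t)) x) 0) * S3
            + W x t * W x t * 0)) x := by
    intro k
    have e : (fun s => V k s t) = fun s =>
        (-(2 * I * k ^ 2)) • S3 + (2 * k) • W s t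
          - I • (fromBlocks 0 (deriv (fun s' => Q (s', t)) s) (deriv (fun s' => R (s', t)) s) 0 * S3)
          - I • (W s t * W s t * S3) := by
      funext s; rw [hV, hderW]
    rw [e]
    exact (((hasDerivAt_const _ _).add ((hWs x).const_smul (2 * k))).sub
      ((matrix_hasDerivAt_mul
        (matrix_hasDerivAt_fromBlocks hQxx.hasDerivAt hRxx.hasDerivAt)
        (hasDerivAt_const _ _)).const_smul I)).sub
      ((matrix_hasDerivAt_mul
        (matrix_hasDerivAt_mul (hWs x) (hWs x)) (hasDerivAt_const _ _)).const_smul I)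
  have key : ∀ k : ℂ,
      deriv (fun τ => U k x τ) t - deriv (fun s => V k s t) x
        + U k x t * V k x t - V k x t * U k x t
      = fromBlocks 0
          (deriv (fun τ => Q (x, τ)) t - I • deriv (deriv fun s => Q (s, t)) x
            + (2 * I) • (Q (x, t) * R (x, t) * Q (x, t)))
          (deriv (fun τ => R (x, τ)) t + I • deriv (deriv fun s => R (s, t)) x
            - (2 * I) • (R (x, t) * Q (x, t) * R (x, t)))
          0 := by
    intro k
    rw [hUt k, show deriv (fun s => V k s t) x = _ from (hVx k).deriv, hU, hV, hderW]
    simp only [hW, hS3]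
    simp only [Matrix.mul_zero, Matrix.zero_mul, add_zero, zero_add, smul_zero, zero_sub,
      sub_zero]
    simp only [sub_eq_add_neg, Matrix.fromBlocks_multiply, Matrix.fromBlocks_smul,
      Matrix.fromBlocks_neg, Matrix.fromBlocks_add, Matrix.fromBlocks_inj]
    refine ⟨?_, ?_, ?_, ?_⟩ <;>
      · simp only [mul_zero, zero_mul, mul_one, one_mul, add_zero, zero_add, smul_zero, neg_zero,
          mul_neg_one, mul_neg, neg_mul, smul_neg, neg_neg, mul_add, add_mul, smul_mul_assoc,
          mul_smul_comm, smul_smul, smul_add, smul_sub, neg_add, mul_assoc]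
        match_scalars <;> ring_nf <;> simp [Complex.I_sq] <;> ring_nf
  have c1 : (I : ℂ) * I = -1 := Complex.I_mul_I
  have e1 : ∀ A B C : Matrix (Fin n) (Fin n) ℂ,
      I • (A - I • B + (2 * I) • C) = I • A + B - (2 : ℂ) • C := by
    intro A B C
    rw [smul_add, smul_sub, smul_smul, smul_smul, c1]
    have : I * (2 * I) = -2 := by rw [mul_left_comm, c1]; ring
    rw [this]
    module
  have e1' : ∀ A B C : Matrix (Fin n) (Fin n) ℂ,
      (-I) • (I • A + B - (2 : ℂ) • C) = A - I • B + (2 * I) • C := by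
    intro A B C
    rw [smul_sub, smul_add, smul_smul, smul_smul]
    have h1 : -I * I = 1 := by rw [neg_mul, c1, neg_neg]
    have h2 : -I * 2 = -(2 * I) := by ring
    rw [h1, h2]
    module
  have e2 : ∀ A B C : Matrix (Fin n) (Fin n) ℂ,
      (-I) • (A + I • B - (2 * I) • C) = (-I) • A + B - (2 : ℂ) • C := by
    intro A B C
    rw [smul_sub, smul_add, smul_smul, smul_smul]
    have h1 : -I * I = 1 := by rw [neg_mul, c1, neg_neg]
    have h2 : -I * (2 * I) = 2 := by rw [neg_mul, mul_left_comm, c1]; ring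
    rw [h1, h2]
    module
  have e2' : ∀ A B C : Matrix (Fin n) (Fin n) ℂ,
      I • ((-I) • A + B - (2 : ℂ) • C) = A + I • B - (2 * I) • C := by
    intro A B C
    rw [smul_sub, smul_add, smul_smul, smul_smul]
    have h1 : I * -I = 1 := by rw [mul_neg, c1, neg_neg]
    have h2 : I * 2 = 2 * I := by ring
    rw [h1, h2]
    module
  simp only [key]
  rw [show (0 : Matrix (Fin n ⊕ Fin n) (Fin n ⊕ Fin n) ℂ) = fromBlocks 0 0 0 0 from
    Matrix.fromBlocks_zero.symm, Matrix.fromBlocks_inj]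
  constructor
  · intro h
    obtain ⟨-, h1, h2, -⟩ := h 0
    constructor
    · rw [← e1 _ _ _, h1, smul_zero]
    · rw [← e2 _ _ _, h2, smul_zero]
  · rintro ⟨h1, h2⟩ k
    refine ⟨rfl, ?_, ?_, rfl⟩
    · rw [← e1' _ _ _, h1, smul_zero]
    · rw [← e2' _ _ _, h2, smul_zero]
end

section
/- Let θ ∈ ℝ, μ ∈ ℂ, and let B be an invertible 2 × 2 complex matrix satisfying: Bᴴ = exp(iθ) • B, B * σ₃ = σ₃ * B, and B * σ = μ • (σ * B). Then μ = 1 or μ = -1, and there exists a nonzero real number ρ such that B = (exp(-iθ/2) * ρ) • !![1, 0; 0, μ]. -/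
open Matrix Complex

/-- Classification of the Z₂ reduction matrix, case γ = 1: an invertible 2×2
matrix B with Bᴴ = e^{iθ} B, commuting with σ₃, and with B σ = μ σ B, has
μ = ±1 and the form B = e^{-iθ/2} ρ · diag(1, μ) with ρ a nonzero real. -/
theorem reduction_matrix_classification_diagonal
    (θ : ℝ) (μ : ℂ)
    (B : Matrix (Fin 2) (Fin 2) ℂ) (hB : IsUnit B)
    (h1 : Bᴴ = Complex.exp (θ * I) • B)
    (h2 : B * !![(1 : ℂ), 0; 0, -1] = !![(1 : ℂ), 0; 0, -1] * B)
    (h3 : B * !![(0 : ℂ), 1; 1, 0] = μ • (!![(0 : ℂ), 1; 1, 0] * B)) :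
    (μ = 1 ∨ μ = -1) ∧
      ∃ ρ : ℝ, ρ ≠ 0 ∧ B = (Complex.exp (-(θ / 2 : ℝ) * I) * (ρ : ℂ)) • !![(1 : ℂ), 0; 0, μ] := by
  set a := B 0 0 with ha
  set b := B 0 1 with hb
  set c := B 1 0 with hc
  set d := B 1 1 with hd
  -- entrywise consequences
  have e2 := congrFun (congrFun h2 0) 1
  have e2' := congrFun (congrFun h2 1) 0
  have e3 := congrFun (congrFun h3 0) 1
  have e3' := congrFun (congrFun h3 1) 0
  have e1 := congrFun (congrFun h1 0) 0
  simp [Matrix.mul_apply, Matrix.vecMul, dotProduct, Fin.sum_univ_two,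
    Matrix.conjTranspose_apply, ← ha, ← hb, ← hc, ← hd] at e2 e2' e3 e3' e1
  -- b = 0, c = 0
  have hb0 : b = 0 := by linear_combination -e2 / 2
  have hc0 : c = 0 := by linear_combination e2' / 2
  have had : a = μ * d := by linear_combination e3
  have hda : d = μ * a := by linear_combination e3'
  -- a ≠ 0
  have hdetu : IsUnit B.det := (Matrix.isUnit_iff_isUnit_det B).1 hB
  have hdet : B.det ≠ 0 := hdetu.ne_zero
  rw [Matrix.det_fin_two, ← ha, ← hb, ← hc, ← hd, hb0, hc0] at hdet
  have ha0 : a ≠ 0 := by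
    intro h; exact hdet (by rw [h]; ring)
  -- μ² = 1
  have hmu2 : μ * μ = 1 := by
    apply mul_right_cancel₀ ha0
    rw [one_mul]
    nth_rewrite 2 [had]
    rw [hda]; ring
  have hmu : μ = 1 ∨ μ = -1 := mul_self_eq_one_iff.1 hmu2
  refine ⟨hmu, ?_⟩
  -- the real number ρ
  set w : ℂ := Complex.exp ((θ / 2 : ℝ) * I) with hw
  have hwne : w ≠ 0 := Complex.exp_ne_zero _
  have hww : Complex.exp (-(θ / 2 : ℝ) * I) * w = 1 := by
    rw [hw, ← Complex.exp_add, ← Complex.exp_zero]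
    congr 1
    ring
  have hcw : (starRingEnd ℂ) w = Complex.exp (-(θ / 2 : ℝ) * I) := by
    rw [hw, ← Complex.exp_conj, map_mul (starRingEnd ℂ), Complex.conj_ofReal, Complex.conj_I]
    congr 1
    ring
  have hexp : Complex.exp (θ * I) = w * w := by
    rw [hw, ← Complex.exp_add]
    congr 1
    push_cast
    ring
  have hconj : (starRingEnd ℂ) (w * a) = w * a := by
    rw [map_mul (starRingEnd ℂ), hcw, e1, hexp]
    calc Complex.exp (-(θ / 2 : ℝ) * I) * (w * w * a)
        = (Complex.exp (-(θ / 2 : ℝ) * I) * w) * (w * a) := by ring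
      _ = w * a := by rw [hww, one_mul]
  obtain ⟨ρ, hρ⟩ : ∃ ρ : ℝ, (ρ : ℂ) = w * a := ⟨(w * a).re, Complex.conj_eq_iff_re.1 hconj⟩
  have hac : a = Complex.exp (-(θ / 2 : ℝ) * I) * (ρ : ℂ) := by
    rw [hρ, ← mul_assoc, hww, one_mul]
  refine ⟨ρ, ?_, ?_⟩
  · intro h
    apply ha0
    have : w * a = 0 := by rw [← hρ, h]; norm_num
    exact (mul_eq_zero.1 this).resolve_left hwne
  · have hac' : a = Complex.exp (-((θ : ℂ) / 2 * I)) * (ρ : ℂ) := by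
      rw [show -((θ : ℂ) / 2 * I) = -(θ / 2 : ℝ) * I by push_cast; ring]
      exact hac
    ext i j
    fin_cases i <;> fin_cases j <;>
      simp [← ha, ← hb, ← hc, ← hd, hb0, hc0, hda]
    · linear_combination hac'
    · linear_combination μ * hac'
end

section
/- Let θ ∈ ℝ, μ ∈ ℂ, and let B be an invertible 2 × 2 complex matrix satisfying: Bᴴ = exp(iθ) • B, B * σ₃ = - σ₃ * B, and B * σ = μ • (σ * B). Then μ = 1 or μ = -1, and there exists a nonzero β ∈ ℂ such that B = (exp(-iθ/2) * β) • !![0, 1; μ, 0], where β is real if μ = 1 and β is purely imaginary if μ = -1. -/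
open Matrix Complex

/-- Classification of the Z₂ reduction matrix, case γ = -1: an invertible 2×2
matrix B with Bᴴ = e^{iθ} B, anticommuting with σ₃, and with B σ = μ σ B, has
μ = ±1 and the form B = e^{-iθ/2} β · !![0,1;μ,0] with β nonzero, real if μ = 1
and purely imaginary if μ = -1. -/
theorem reduction_matrix_classification_antidiagonal
    (θ : ℝ) (μ : ℂ)
    (B : Matrix (Fin 2) (Fin 2) ℂ) (hB : IsUnit B)
    (h1 : Bᴴ = Complex.exp (θ * I) • B)
    (h2 : B * !![(1 : ℂ), 0; 0, -1] = -(!![(1 : ℂ), 0; 0, -1] * B))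
    (h3 : B * !![(0 : ℂ), 1; 1, 0] = μ • (!![(0 : ℂ), 1; 1, 0] * B)) :
    (μ = 1 ∨ μ = -1) ∧
      ∃ β : ℂ, β ≠ 0 ∧ B = (Complex.exp (-(θ / 2 : ℝ) * I) * β) • !![(0 : ℂ), 1; μ, 0]
        ∧ (μ = 1 → β.im = 0) ∧ (μ = -1 → β.re = 0) := by
  have e2 := Matrix.ext_iff.mpr h2
  have e3 := Matrix.ext_iff.mpr h3
  have e1 := Matrix.ext_iff.mpr h1
  have h00 : B 0 0 = 0 := by
    have h := e2 0 0
    simp [Matrix.mul_apply, Fin.sum_univ_two, Matrix.vecMul, dotProduct] at h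
    linear_combination h / 2
  have h11 : B 1 1 = 0 := by
    have h := e2 1 1
    simp [Matrix.mul_apply, Fin.sum_univ_two, Matrix.vecMul, dotProduct] at h
    linear_combination -h / 2
  have hb : B 0 1 = μ * B 1 0 := by
    have h := e3 0 0
    simpa [Matrix.mul_apply, Fin.sum_univ_two, Matrix.vecMul, dotProduct] using h
  have hc : B 1 0 = μ * B 0 1 := by
    have h := e3 1 1
    simpa [Matrix.mul_apply, Fin.sum_univ_two, Matrix.vecMul, dotProduct] using h
  have hdet := (Matrix.isUnit_iff_isUnit_det B).mp hB
  rw [Matrix.det_fin_two, h00, h11] at hdet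
  simp at hdet
  have hb0 : B 0 1 ≠ 0 := hdet.1
  have hmu : μ = 1 ∨ μ = -1 := by
    have h : (μ * μ - 1) * B 0 1 = 0 := by linear_combination -hb - μ * hc
    rcases mul_eq_zero.mp h with h' | h'
    · exact mul_self_eq_one_iff.mp (by linear_combination h')
    · exact absurd h' hb0
  have hcb : (starRingEnd ℂ) (B 1 0) = Complex.exp (θ * I) * B 0 1 := by
    have h := e1 0 1
    simpa [Matrix.conjTranspose_apply] using h
  have hconjexp : (starRingEnd ℂ) (Complex.exp ((θ / 2 : ℝ) * I))
      = Complex.exp (-((θ / 2 : ℝ) : ℂ) * I) := by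
    rw [← Complex.exp_conj, RingHom.map_mul, Complex.conj_ofReal, Complex.conj_I]
    ring_nf
  refine ⟨hmu, Complex.exp ((θ / 2 : ℝ) * I) * B 0 1, ?_, ?_, ?_, ?_⟩
  · exact mul_ne_zero (Complex.exp_ne_zero _) hb0
  · have key : Complex.exp (-(θ / 2 : ℝ) * I) * (Complex.exp ((θ / 2 : ℝ) * I) * B 0 1)
        = B 0 1 := by
      rw [← mul_assoc, ← Complex.exp_add]
      have h0 : -(↑(θ / 2) : ℂ) * I + (↑(θ / 2) : ℂ) * I = 0 := by ring
      rw [h0, Complex.exp_zero, one_mul]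
    rw [key]
    ext i j
    fin_cases i <;> fin_cases j <;>
      simp [h00, h11, Matrix.smul_apply] <;>
      linear_combination hc
  · intro h1'
    rw [hc, h1', one_mul] at hcb
    have hconj : (starRingEnd ℂ) (Complex.exp ((θ / 2 : ℝ) * I) * B 0 1)
        = Complex.exp ((θ / 2 : ℝ) * I) * B 0 1 := by
      rw [RingHom.map_mul, hcb, hconjexp, ← mul_assoc, ← Complex.exp_add]
      congr 2
      push_cast
      ring
    exact Complex.conj_eq_iff_im.mp hconj
  · intro h1'
    rw [hc, h1'] at hcb
    rw [neg_one_mul, map_neg] at hcb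
    have hcb' : (starRingEnd ℂ) (B 0 1) = -(Complex.exp (θ * I) * B 0 1) := by
      linear_combination -hcb
    have hconj : (starRingEnd ℂ) (Complex.exp ((θ / 2 : ℝ) * I) * B 0 1)
        = -(Complex.exp ((θ / 2 : ℝ) * I) * B 0 1) := by
      rw [RingHom.map_mul, hcb', hconjexp, mul_neg, ← mul_assoc, ← Complex.exp_add]
      congr 3
      push_cast
      ring
    have h := congrArg Complex.re hconj
    rw [Complex.conj_re, Complex.neg_re] at h
    linarith
end

section
/- Let c ∈ ℝ and q : ℝ → ℝ → ℂ. Assume: for every t > 0 the function x ↦ q(x,t) is twice differentiable on ℝ and x ↦ ∂ₓ²q(x,t) is continuous; for every x ∈ ℝ the function t ↦ q(x,t) is differentiable on (0,∞); for every t > 0 the function x ↦ ∂ₜq(x,t) is continuous. For x ≥ 0, t > 0 define the diagonal 2 × 2 matrices Q(x,t) = !![q(x,t), 0; 0, q(-x,t)] and R(x,t) = c • !![conj(q(x,t)), 0; 0, conj(q(-x,t))]. Assume that for all x > 0 and t > 0: i • ∂ₜQ(x,t) + ∂ₓ²Q(x,t) - 2 • Q(x,t) * R(x,t) * Q(x,t)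 = 0, where ∂ₜ is the derivative of t ↦ Q(x,t) and ∂ₓ² the second derivative of x ↦ Q(x,t). Then for all x ∈ ℝ and all t > 0: i • ∂ₜq(x,t) + ∂ₓ²q(x,t) - 2c • q(x,t) * conj(q(x,t)) * q(x,t) = 0, i.e. q solves the (local) nonlinear Schrödinger equation on the whole line. -/
set_option maxRecDepth 8000


open Matrix Complex

attribute [local instance] Matrix.normedAddCommGroup Matrix.normedSpace

private noncomputable def E00 : Matrix (Fin 2) (Fin 2) ℂ := !![1, 0; 0, 0]
private noncomputable def E11 : Matrix (Fin 2) (Fin 2) ℂ := !![0, 0; 0, 1]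

private lemma diag_decomp (a b : ℂ) : !![a, 0; 0, b] = a • E00 + b • E11 := by
  ext i j
  fin_cases i <;> fin_cases j <;> simp [E00, E11]

private lemma diag_triple (c a b a' b' : ℂ) :
    !![a, 0; 0, b] * (c • !![a', 0; 0, b']) * !![a, 0; 0, b]
      = (c * (a * a' * a)) • E00 + (c * (b * b' * b)) • E11 := by
  ext i j
  fin_cases i <;> fin_cases j <;>
    simp [E00, E11, Matrix.mul_apply, Fin.sum_univ_two] <;> ring

/-- The γ = 1 reduction of the matrix AKNS half-line problem yields the local
NLS equation on the whole line. -/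
theorem local_nls_from_matrix_reduction
    (c : ℝ) (q : ℝ → ℝ → ℂ)
    -- regularity in x : twice differentiable with continuous second derivative
    (hx1 : ∀ t : ℝ, 0 < t → Differentiable ℝ (fun x => q x t))
    (hx2 : ∀ t : ℝ, 0 < t → Differentiable ℝ (deriv fun x => q x t))
    (hx3 : ∀ t : ℝ, 0 < t → Continuous (deriv (deriv fun x => q x t)))
    -- regularity in t
    (ht1 : ∀ x : ℝ, ∀ t : ℝ, 0 < t → DifferentiableAt ℝ (fun τ => q x τ) t)
    (ht2 : ∀ t : ℝ, 0 < t → Continuous (fun x => deriv (fun τ => q x τ) t))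
    -- the reduced matrix data
    (Q R : ℝ → ℝ → Matrix (Fin 2) (Fin 2) ℂ)
    (hQ : ∀ x t : ℝ, Q x t = !![q x t, 0; 0, q (-x) t])
    (hR : ∀ x t : ℝ, R x t = (c : ℂ) • !![starRingEnd ℂ (q x t), 0; 0, starRingEnd ℂ (q (-x) t)])
    -- the reduced matrix AKNS equation on the half-line
    (hmat : ∀ x : ℝ, 0 < x → ∀ t : ℝ, 0 < t →
      I • deriv (fun τ => Q x τ) t + deriv (deriv fun s => Q s t) x
        - (2 : ℂ) • (Q x t * R x t * Q x t) = 0) :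
    -- conclusion : the local NLS equation on the whole line
    ∀ x : ℝ, ∀ t : ℝ, 0 < t →
      I * deriv (fun τ => q x τ) t + deriv (deriv fun s => q s t) x
        - 2 * (c : ℂ) * (q x t * starRingEnd ℂ (q x t) * q x t) = 0 := by
  intro x t ht
  -- notation
  have hQrep : ∀ s τ : ℝ, Q s τ = q s τ • E00 + q (-s) τ • E11 := by
    intro s τ; rw [hQ]; exact diag_decomp _ _
  -- derivative of s ↦ q (-s) t
  have hneg : ∀ s : ℝ, HasDerivAt (fun u : ℝ => q (-u) t)
      (-(deriv (fun x => q x t) (-s))) s := by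
    intro s
    have h1 := ((hx1 t ht) (-s)).hasDerivAt
    have h2 : HasDerivAt (fun u : ℝ => -u) (-1 : ℝ) s := (hasDerivAt_id s).neg
    have := h1.scomp s h2
    simpa [Function.comp_def] using this
  -- derivative in x of Q
  have hQx : deriv (fun s => Q s t) = fun s =>
      (deriv (fun x => q x t) s) • E00 + (-(deriv (fun x => q x t) (-s))) • E11 := by
    funext s
    have h0 : (fun s => Q s t) = fun s => q s t • E00 + q (-s) t • E11 :=
      funext fun s => hQrep s t
    rw [h0]
    exact ((((hx1 t ht) s).hasDerivAt).smul_const E00).add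
      ((hneg s).smul_const E11) |>.deriv
  -- second derivative in x of Q
  have hQxx : ∀ y : ℝ, deriv (deriv fun s => Q s t) y =
      (deriv (deriv fun x => q x t) y) • E00
        + (deriv (deriv fun x => q x t) (-y)) • E11 := by
    intro y
    rw [hQx]
    have h1 := (((hx2 t ht) y).hasDerivAt).smul_const E00
    have h2 : HasDerivAt (fun s : ℝ => -(deriv (fun x => q x t) (-s)))
        (deriv (deriv fun x => q x t) (-y)) y := by
      have ha := ((hx2 t ht) (-y)).hasDerivAt
      have hb : HasDerivAt (fun u : ℝ => -u) (-1 : ℝ) y := (hasDerivAt_id y).neg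
      have := (ha.scomp y hb).neg
      simpa [Function.comp_def, Pi.neg_def] using this
    exact (h1.add (h2.smul_const E11)).deriv
  -- time derivative of Q
  have hQt : ∀ y : ℝ, deriv (fun τ => Q y τ) t =
      (deriv (fun τ => q y τ) t) • E00 + (deriv (fun τ => q (-y) τ) t) • E11 := by
    intro y
    have h0 : (fun τ => Q y τ) = fun τ => q y τ • E00 + q (-y) τ • E11 :=
      funext fun τ => hQrep y τ
    rw [h0]
    exact (((ht1 y t ht).hasDerivAt).smul_const E00).add
      (((ht1 (-y) t ht).hasDerivAt).smul_const E11) |>.deriv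
  -- scalar equation away from the origin
  have key : ∀ y : ℝ, y ≠ 0 →
      I * deriv (fun τ => q y τ) t + deriv (deriv fun s => q s t) y
        - 2 * (c : ℂ) * (q y t * starRingEnd ℂ (q y t) * q y t) = 0 := by
    intro y hy
    rcases hy.lt_or_gt with hlt | hgt
    · -- y < 0 : use entry (1,1) of the matrix equation at -y
      have heq := hmat (-y) (by linarith) t ht
      rw [hQt, hQxx, hQ, hR, diag_triple] at heq
      have h11 := congrFun (congrFun heq 1) 1
      simp only [neg_neg] at h11
      simp [E00, E11] at h11
      linear_combination h11
    · -- 0 < y : use entry (0,0)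
      have heq := hmat y hgt t ht
      rw [hQt, hQxx, hQ, hR, diag_triple] at heq
      have h00 := congrFun (congrFun heq 0) 0
      simp [E00, E11] at h00
      linear_combination h00
  -- extend to y = 0 by continuity
  let F : ℝ → ℂ := fun z =>
    I * deriv (fun τ => q z τ) t + deriv (deriv fun s => q s t) z
      - 2 * (c : ℂ) * (q z t * starRingEnd ℂ (q z t) * q z t)
  have hFc : Continuous F := by
    have h1 : Continuous fun z => deriv (fun τ => q z τ) t := ht2 t ht
    have h2 : Continuous (deriv (deriv fun s => q s t)) := hx3 t ht
    have h3 : Continuous fun z => q z t := (hx1 t ht).continuous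
    have h4 : Continuous fun z => starRingEnd ℂ (q z t) := by
      simp only [starRingEnd_apply]
      exact h3.star
    exact (((continuous_const.mul h1).add h2).sub
      (continuous_const.mul ((h3.mul h4).mul h3)))
  have hF0 : F = fun _ => 0 := by
    apply Continuous.ext_on (dense_compl_singleton (0 : ℝ)) hFc continuous_const
    intro z hz
    exact key z hz
  exact congrFun hF0 x
end

section
/- Let c ∈ ℝ and q : ℝ → ℝ → ℂ. Assume: for every t > 0 the function x ↦ q(x,t) is twice differentiable on ℝ and x ↦ ∂ₓ²q(x,t) is continuous; for every x ∈ ℝ the function t ↦ q(x,t) is differentiable on (0,∞); for every t > 0 the function x ↦ ∂ₜq(x,t) is continuous. For x ≥ 0, t > 0 define the diagonal 2 × 2 matrices Q(x,t) = !![q(x,t), 0; 0, q(-x,t)] and R(x,t) = c • !![conj(q(-x,t)), 0; 0, conj(q(x,t))]. Assume that for all x > 0 and t > 0: i • ∂ₜQ(x,t) + ∂ₓ²Q(x,t) - 2 • Q(x,t) * R(x,t) * Q(x,t) = 0, where ∂ₜ is the derivative of t ↦ Q(x,t) and ∂ₓ² the second derivative of x ↦ Q(x,t). Then for all x ∈ ℝ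 and all t > 0: i • ∂ₜq(x,t) + ∂ₓ²q(x,t) - 2c • q(x,t) * conj(q(-x,t)) * q(x,t) = 0, i.e. q solves the nonlocal nonlinear Schrödinger equation of Ablowitz–Musslimani on the whole line. -/
open Matrix Complex Filter Topology

attribute [local instance] Matrix.normedAddCommGroup Matrix.normedSpace

private lemma diag2_eq (z w : ℂ) : (!![z, 0; 0, w] : Matrix (Fin 2) (Fin 2) ℂ)
    = z • !![1, 0; 0, 0] + w • !![0, 0; 0, 1] := by
  ext i j; fin_cases i <;> fin_cases j <;> simp

private lemma diag2_hasDerivAt {a b : ℝ → ℂ} {a' b' : ℂ} {x : ℝ}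
    (ha : HasDerivAt a a' x) (hb : HasDerivAt b b' x) :
    HasDerivAt (fun s => (!![a s, 0; 0, b s] : Matrix (Fin 2) (Fin 2) ℂ))
      !![a', 0; 0, b'] x := by
  rw [show (fun s => (!![a s, 0; 0, b s] : Matrix (Fin 2) (Fin 2) ℂ))
      = fun s => a s • !![1, 0; 0, 0] + b s • !![0, 0; 0, 1] from
      funext fun s => diag2_eq _ _, diag2_eq a' b']
  exact (ha.smul_const _).add (hb.smul_const _)

/-- The γ = -1 reduction of the matrix AKNS half-line problem yields the
nonlocal (Ablowitz–Musslimani) NLS equation on the whole line. -/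
theorem nonlocal_nls_from_matrix_reduction
    (c : ℝ) (q : ℝ → ℝ → ℂ)
    -- regularity in x : twice differentiable with continuous second derivative
    (hx1 : ∀ t : ℝ, 0 < t → Differentiable ℝ (fun x => q x t))
    (hx2 : ∀ t : ℝ, 0 < t → Differentiable ℝ (deriv fun x => q x t))
    (hx3 : ∀ t : ℝ, 0 < t → Continuous (deriv (deriv fun x => q x t)))
    -- regularity in t
    (ht1 : ∀ x : ℝ, ∀ t : ℝ, 0 < t → DifferentiableAt ℝ (fun τ => q x τ) t)
    (ht2 : ∀ t : ℝ, 0 < t → Continuous (fun x => deriv (fun τ => q x τ) t))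
    -- the reduced matrix data
    (Q R : ℝ → ℝ → Matrix (Fin 2) (Fin 2) ℂ)
    (hQ : ∀ x t : ℝ, Q x t = !![q x t, 0; 0, q (-x) t])
    (hR : ∀ x t : ℝ, R x t = (c : ℂ) • !![starRingEnd ℂ (q (-x) t), 0; 0, starRingEnd ℂ (q x t)])
    -- the reduced matrix AKNS equation on the half-line
    (hmat : ∀ x : ℝ, 0 < x → ∀ t : ℝ, 0 < t →
      I • deriv (fun τ => Q x τ) t + deriv (deriv fun s => Q s t) x
        - (2 : ℂ) • (Q x t * R x t * Q x t) = 0) :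
    -- conclusion : the nonlocal NLS equation on the whole line
    ∀ x : ℝ, ∀ t : ℝ, 0 < t →
      I * deriv (fun τ => q x τ) t + deriv (deriv fun s => q s t) x
        - 2 * (c : ℂ) * (q x t * starRingEnd ℂ (q (-x) t) * q x t) = 0 := by
  intro x t ht
  set d : ℝ → ℂ := deriv (fun s => q s t) with hd
  -- derivative facts in x
  have hdx : ∀ s : ℝ, HasDerivAt (fun u => q u t) (d s) s :=
    fun s => ((hx1 t ht) s).hasDerivAt
  have hdneg : ∀ s : ℝ, HasDerivAt (fun u => q (-u) t) (-(d (-s))) s := by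
    intro s
    have h := (hdx (-s)).scomp s (hasDerivAt_neg s)
    simpa [Function.comp_def] using h
  have hQxfun : deriv (fun s => Q s t) = fun s => !![d s, 0; 0, -(d (-s))] := by
    funext s
    have hfun : (fun u => Q u t) = fun u => !![q u t, 0; 0, q (-u) t] :=
      funext fun u => hQ u t
    rw [hfun]
    exact (diag2_hasDerivAt (hdx s) (hdneg s)).deriv
  have hd2 : ∀ s : ℝ, HasDerivAt d (deriv d s) s := fun s => ((hx2 t ht) s).hasDerivAt
  have hdneg2 : ∀ s : ℝ, HasDerivAt (fun u => -(d (-u))) (deriv d (-s)) s := by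
    intro s
    have h := ((hd2 (-s)).scomp s (hasDerivAt_neg s)).neg
    simpa [Function.comp_def, Pi.neg_def] using h
  have hQxx : ∀ y : ℝ, deriv (deriv fun s => Q s t) y = !![deriv d y, 0; 0, deriv d (-y)] := by
    intro y
    rw [hQxfun]
    exact (diag2_hasDerivAt (hd2 y) (hdneg2 y)).deriv
  have hQt : ∀ y : ℝ, deriv (fun τ => Q y τ) t
      = !![deriv (fun τ => q y τ) t, 0; 0, deriv (fun τ => q (-y) τ) t] := by
    intro y
    have hfun : (fun τ => Q y τ) = fun τ => !![q y τ, 0; 0, q (-y) τ] :=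
      funext fun τ => hQ y τ
    rw [hfun]
    exact (diag2_hasDerivAt (ht1 y t ht).hasDerivAt (ht1 (-y) t ht).hasDerivAt).deriv
  -- scalar equation away from 0
  have key : ∀ y : ℝ, y ≠ 0 →
      I * deriv (fun τ => q y τ) t + deriv (deriv fun s => q s t) y
        - 2 * (c : ℂ) * (q y t * starRingEnd ℂ (q (-y) t) * q y t) = 0 := by
    have main : ∀ y : ℝ, 0 < y →
        (I * deriv (fun τ => q y τ) t + deriv d y
          - 2 * (c : ℂ) * (q y t * starRingEnd ℂ (q (-y) t) * q y t) = 0) ∧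
        (I * deriv (fun τ => q (-y) τ) t + deriv d (-y)
          - 2 * (c : ℂ) * (q (-y) t * starRingEnd ℂ (q y t) * q (-y) t) = 0) := by
      intro y hy
      have h := hmat y hy t ht
      rw [hQt y, hQxx y, hQ y t, hR y t] at h
      have h00 := congrFun (congrFun h 0) 0
      have h11 := congrFun (congrFun h 1) 1
      simp [Matrix.mul_apply, Matrix.add_apply, Matrix.sub_apply, Matrix.smul_apply,
        Fin.sum_univ_two, smul_eq_mul] at h00 h11
      constructor
      · linear_combination h00
      · linear_combination h11
    intro y hy
    rcases hy.lt_or_gt with h | h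
    · have := (main (-y) (by linarith)).2
      simpa using this
    · exact (main y h).1
  -- treat x = 0 by continuity
  rcases eq_or_ne x 0 with rfl | hx0
  · set G : ℝ → ℂ := fun y => I * deriv (fun τ => q y τ) t + deriv d y
      - 2 * (c : ℂ) * (q y t * starRingEnd ℂ (q (-y) t) * q y t) with hG
    have hcont : Continuous G := by
      have h1 := ht2 t ht
      have h2 := hx3 t ht
      have h3 : Continuous (fun y => q y t) := (hx1 t ht).continuous
      have h4 : Continuous (fun y => q (-y) t) := h3.comp continuous_neg
      have h5 : Continuous (fun y => starRingEnd ℂ (q (-y) t)) := by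
        exact continuous_star.comp h4
      exact ((continuous_const.mul h1).add h2).sub
        (continuous_const.mul ((h3.mul h5).mul h3))
    have hlim0 : Tendsto G (𝓝[>] (0:ℝ)) (𝓝 (G 0)) :=
      (hcont.tendsto 0).mono_left nhdsWithin_le_nhds
    have hlim1 : Tendsto G (𝓝[>] (0:ℝ)) (𝓝 0) := by
      refine Tendsto.congr' ?_ tendsto_const_nhds
      filter_upwards [self_mem_nhdsWithin] with y hy
      exact (key y (ne_of_gt hy)).symm
    have : G 0 = 0 := tendsto_nhds_unique hlim0 hlim1
    simpa [hG] using this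
  · exact key x hx0
end

section
/- Let G₀, G₁, H₀, H₁ be 2 × 2 complex matrices. Define the 4 × 4 matrices W₀ = fromBlocks 0 G₀ H₀ 0, W₁ = fromBlocks 0 G₁ H₁ 0, Σ₃ = fromBlocks 1 0 0 (-1), and for k ∈ ℂ set P(k) = 2k • W₀ - i • (W₁ * Σ₃) - i • (W₀ * W₀ * Σ₃). Suppose K is a 4 × 4 complex matrix such that for every k ∈ ℂ: (-2 i k² • Σ₃ + P(-k)) * K = K * (-2 i k² • Σ₃ + P(k)). Then there exist 2 × 2 complex matrices K₁, K₄ with K = fromBlocks K₁ 0 0 K₄, and the boundary relations hold: G₀ * K₄ = - K₁ * G₀, H₀ * K₁ = - K₄ * H₀, G₁ * K₄ = K₁ * G₁, and H₁ * K₁ = K₄ * H₁. -/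
open Matrix Complex

/-- Classification of linearizable boundary conditions: a k-independent matrix K
intertwining the t-part of the Lax pair at k and -k is block diagonal and
imposes the boundary relations on G₀, G₁, H₀, H₁. -/
theorem linearizable_boundary_conditions
    (G₀ G₁ H₀ H₁ : Matrix (Fin 2) (Fin 2) ℂ)
    (W₀ W₁ S3 : Matrix (Fin 2 ⊕ Fin 2) (Fin 2 ⊕ Fin 2) ℂ)
    (hW₀ : W₀ = fromBlocks 0 G₀ H₀ 0)
    (hW₁ : W₁ = fromBlocks 0 G₁ H₁ 0)
    (hS3 : S3 = fromBlocks 1 0 0 (-1))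
    (P : ℂ → Matrix (Fin 2 ⊕ Fin 2) (Fin 2 ⊕ Fin 2) ℂ)
    (hP : ∀ k : ℂ, P k = (2 * k) • W₀ - I • (W₁ * S3) - I • (W₀ * W₀ * S3))
    (K : Matrix (Fin 2 ⊕ Fin 2) (Fin 2 ⊕ Fin 2) ℂ)
    (hK : ∀ k : ℂ,
      ((-(2 * I * k ^ 2)) • S3 + P (-k)) * K = K * ((-(2 * I * k ^ 2)) • S3 + P k)) :
    ∃ K₁ K₄ : Matrix (Fin 2) (Fin 2) ℂ,
      K = fromBlocks K₁ 0 0 K₄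
        ∧ G₀ * K₄ = -(K₁ * G₀)
        ∧ H₀ * K₁ = -(K₄ * H₀)
        ∧ G₁ * K₄ = K₁ * G₁
        ∧ H₁ * K₁ = K₄ * H₁ := by
  -- The polynomial (in k) identity extracted from the intertwining relation.
  have F : ∀ k : ℂ, (2*I*k^2) • (S3*K - K*S3) + (2*k) • (W₀*K + K*W₀)
      + (I • ((W₁*S3)*K) + I • ((W₀*W₀*S3)*K)
         - (I • (K*(W₁*S3)) + I • (K*(W₀*W₀*S3)))) = 0 := by
    intro k
    have h := hK k
    rw [hP, hP] at h
    simp only [add_mul, sub_mul, mul_add, mul_sub, smul_mul_assoc, mul_smul_comm,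
      mul_neg, neg_mul, neg_smul, smul_smul] at h
    linear_combination (norm := module) -h
  -- k² coefficient: S3 commutes with K
  have hS : S3 * K = K * S3 := by
    have e : (4*I) • (S3*K - K*S3) = 0 := by
      linear_combination (norm := module) F 1 + F (-1) - (2:ℂ) • F 0
    have h4 : (4 * I : ℂ) ≠ 0 := by simp [I_ne_zero]
    exact sub_eq_zero.mp ((smul_eq_zero.mp e).resolve_left h4)
  -- k coefficient: W₀ anticommutes with K
  have hW : W₀ * K = -(K * W₀) := by
    have e : (4:ℂ) • (W₀*K + K*W₀) = 0 := by
      linear_combination (norm := module) F 1 - F (-1)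
    have h4 : (4 : ℂ) ≠ 0 := by norm_num
    have := (smul_eq_zero.mp e).resolve_left h4
    linear_combination (norm := module) this
  -- W₀² commutes with K
  have hW2 : (W₀ * W₀) * K = K * (W₀ * W₀) := by
    calc (W₀ * W₀) * K = W₀ * (W₀ * K) := by rw [mul_assoc]
    _ = W₀ * (-(K * W₀)) := by rw [hW]
    _ = -((W₀ * K) * W₀) := by rw [mul_neg, ← mul_assoc]
    _ = -(-(K * W₀) * W₀) := by rw [hW]
    _ = K * (W₀ * W₀) := by rw [neg_mul, neg_neg, mul_assoc]
  have hA : (W₀*W₀*S3) * K = K * (W₀*W₀*S3) := by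
    rw [mul_assoc, hS, ← mul_assoc, hW2, mul_assoc]
  -- constant coefficient: W₁*S3 commutes with K
  have hW1S : (W₁*S3) * K = K * (W₁*S3) := by
    have e : (I:ℂ) • ((W₁*S3)*K - K*(W₁*S3)) = 0 := by
      linear_combination (norm := module) F 0 - (I:ℂ) • hA
    exact sub_eq_zero.mp ((smul_eq_zero.mp e).resolve_left I_ne_zero)
  have hSS : S3 * S3 = 1 := by
    rw [hS3, fromBlocks_multiply]
    simp [← fromBlocks_one]
  -- W₁ commutes with K
  have hW1 : W₁ * K = K * W₁ := by
    have h1 : (W₁ * K) * S3 = (K * W₁) * S3 := by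
      calc (W₁ * K) * S3 = W₁ * (K * S3) := by rw [mul_assoc]
      _ = W₁ * (S3 * K) := by rw [hS]
      _ = (W₁ * S3) * K := by rw [mul_assoc]
      _ = K * (W₁ * S3) := hW1S
      _ = (K * W₁) * S3 := by rw [mul_assoc]
    calc W₁ * K = (W₁ * K) * (S3 * S3) := by rw [hSS, mul_one]
    _ = ((W₁ * K) * S3) * S3 := by rw [← mul_assoc]
    _ = ((K * W₁) * S3) * S3 := by rw [h1]
    _ = (K * W₁) * (S3 * S3) := by rw [mul_assoc (K * W₁)]
    _ = K * W₁ := by rw [hSS, mul_one]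
  -- Block decomposition
  obtain ⟨K₁, K₂, K₃, K₄, hKb⟩ : ∃ A B C D, K = fromBlocks A B C D :=
    ⟨K.toBlocks₁₁, K.toBlocks₁₂, K.toBlocks₂₁, K.toBlocks₂₂, (fromBlocks_toBlocks K).symm⟩
  -- off-diagonal blocks vanish
  rw [hS3, hKb, fromBlocks_multiply, fromBlocks_multiply] at hS
  simp only [one_mul, mul_one, zero_mul, mul_zero, add_zero, zero_add, neg_mul, mul_neg] at hS
  have hb := fromBlocks_inj.mp hS
  have hK2 : K₂ = 0 := by
    have h2 : (2:ℂ) • K₂ = 0 := by linear_combination (norm := module) hb.2.1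
    exact (smul_eq_zero.mp h2).resolve_left (by norm_num)
  have hK3 : K₃ = 0 := by
    have h2 : (2:ℂ) • K₃ = 0 := by linear_combination (norm := module) - hb.2.2.1
    exact (smul_eq_zero.mp h2).resolve_left (by norm_num)
  rw [hK2, hK3] at hKb
  rw [hW₀, hKb, fromBlocks_multiply, fromBlocks_multiply] at hW
  simp only [zero_mul, mul_zero, add_zero, zero_add, fromBlocks_neg, neg_zero] at hW
  have hb0 := fromBlocks_inj.mp hW
  rw [hW₁, hKb, fromBlocks_multiply, fromBlocks_multiply] at hW1
  simp only [zero_mul, mul_zero, add_zero, zero_add] at hW1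
  have hb1 := fromBlocks_inj.mp hW1
  exact ⟨K₁, K₄, hKb, hb0.2.1, hb0.2.2.1, hb1.2.1, hb1.2.2.1⟩
end

section
/- Let γ, γ̃, Γ, Γ̃ be diagonal 2 × 2 complex matrices (so all of them pairwise commute) and let u be a nonzero complex number. Define the 4 × 4 matrices J₁ = fromBlocks 1 0 (u • Γ) 1, J₃ = fromBlocks 1 (-(u⁻¹) • Γ̃) 0 1, and J₄ = fromBlocks 1 (-(u⁻¹) • γ) (u • γ̃) (1 - γ * γ̃). Then J₄ is invertible with J₄⁻¹ = fromBlocks (1 - γ * γ̃) ((u⁻¹) • γ) (-(u) • γ̃) 1, the product J₂ := J₃ * J₄⁻¹ * J₁ is invertible, and J₂⁻¹ = fromBlocks 1 (-(u⁻¹) • (γ - Γ̃)) (u • (γ̃ - Γ)) (1 - (γ̃ - Γ) * (γ - Γ̃)). -/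
open Matrix

set_option maxHeartbeats 1000000

/-- Explicit inverses of the jump matrices J₄ and J₂ = J₃ J₄⁻¹ J₁ of the matrix
Riemann–Hilbert problem of the unified transform. -/
theorem jump_matrix_inverses
    (γ γt Γ Γt : Matrix (Fin 2) (Fin 2) ℂ)
    (hγ : γ.IsDiag) (hγt : γt.IsDiag) (hΓ : Γ.IsDiag) (hΓt : Γt.IsDiag)
    (u : ℂ) (hu : u ≠ 0)
    (J₁ J₃ J₄ : Matrix (Fin 2 ⊕ Fin 2) (Fin 2 ⊕ Fin 2) ℂ)
    (hJ₁ : J₁ = fromBlocks 1 0 (u • Γ) 1)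
    (hJ₃ : J₃ = fromBlocks 1 (-(u⁻¹ • Γt)) 0 1)
    (hJ₄ : J₄ = fromBlocks 1 (-(u⁻¹ • γ)) (u • γt) (1 - γ * γt)) :
    IsUnit J₄
      ∧ J₄⁻¹ = fromBlocks (1 - γ * γt) (u⁻¹ • γ) (-(u • γt)) 1
      ∧ IsUnit (J₃ * J₄⁻¹ * J₁)
      ∧ (J₃ * J₄⁻¹ * J₁)⁻¹
          = fromBlocks 1 (-(u⁻¹ • (γ - Γt))) (u • (γt - Γ)) (1 - (γt - Γ) * (γ - Γt)) := by
  obtain ⟨a, rfl⟩ : ∃ a, γ = diagonal a := ⟨γ.diag, hγ.diagonal_diag.symm⟩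
  obtain ⟨c, rfl⟩ : ∃ c, γt = diagonal c := ⟨γt.diag, hγt.diagonal_diag.symm⟩
  obtain ⟨b, rfl⟩ : ∃ b, Γ = diagonal b := ⟨Γ.diag, hΓ.diagonal_diag.symm⟩
  obtain ⟨d, rfl⟩ : ∃ d, Γt = diagonal d := ⟨Γt.diag, hΓt.diagonal_diag.symm⟩
  subst hJ₁ hJ₃ hJ₄
  have h4 : (fromBlocks 1 (-(u⁻¹ • diagonal a)) (u • diagonal c)
        (1 - diagonal a * diagonal c)) *
      (fromBlocks (1 - diagonal a * diagonal c) (u⁻¹ • diagonal a)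
        (-(u • diagonal c)) 1 :
        Matrix (Fin 2 ⊕ Fin 2) (Fin 2 ⊕ Fin 2) ℂ) = 1 := by
    ext (i | i) (j | j) <;> fin_cases i <;> fin_cases j <;>
      simp [Matrix.mul_apply, Fintype.sum_sum_type, Fin.sum_univ_two,
        Matrix.fromBlocks, Matrix.diagonal_apply, Matrix.one_apply,
        Matrix.sub_apply] <;>
      try ring
    all_goals field_simp
    all_goals ring
  have hU4 : IsUnit (fromBlocks 1 (-(u⁻¹ • diagonal a)) (u • diagonal c)
      (1 - diagonal a * diagonal c) :
      Matrix (Fin 2 ⊕ Fin 2) (Fin 2 ⊕ Fin 2) ℂ) :=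
    ⟨⟨_, _, h4, mul_eq_one_comm.mp h4⟩, rfl⟩
  have hi4 := Matrix.inv_eq_right_inv h4
  rw [hi4]
  have st1 : (fromBlocks 1 (-(u⁻¹ • diagonal d)) 0 1 :
        Matrix (Fin 2 ⊕ Fin 2) (Fin 2 ⊕ Fin 2) ℂ) *
      fromBlocks (1 - diagonal a * diagonal c) (u⁻¹ • diagonal a)
        (-(u • diagonal c)) 1 =
      fromBlocks (1 - (diagonal a - diagonal d) * diagonal c)
        (u⁻¹ • (diagonal a - diagonal d)) (-(u • diagonal c)) 1 := by
    ext (i | i) (j | j) <;> fin_cases i <;> fin_cases j <;>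
      simp [Matrix.mul_apply, Fintype.sum_sum_type, Fin.sum_univ_two,
        Matrix.fromBlocks, Matrix.diagonal_apply, Matrix.one_apply,
        Matrix.sub_apply] <;>
      try ring
    all_goals field_simp
    all_goals ring
  have st2 : (fromBlocks (1 - (diagonal a - diagonal d) * diagonal c)
        (u⁻¹ • (diagonal a - diagonal d)) (-(u • diagonal c)) 1 :
        Matrix (Fin 2 ⊕ Fin 2) (Fin 2 ⊕ Fin 2) ℂ) *
      fromBlocks 1 0 (u • diagonal b) 1 =
      fromBlocks (1 - (diagonal a - diagonal d) * (diagonal c - diagonal b))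
        (u⁻¹ • (diagonal a - diagonal d)) (-(u • (diagonal c - diagonal b))) 1 := by
    ext (i | i) (j | j) <;> fin_cases i <;> fin_cases j <;>
      simp [Matrix.mul_apply, Fintype.sum_sum_type, Fin.sum_univ_two,
        Matrix.fromBlocks, Matrix.diagonal_apply, Matrix.one_apply,
        Matrix.sub_apply] <;>
      try ring
    all_goals field_simp
    all_goals ring
  have st3 : (fromBlocks (1 - (diagonal a - diagonal d) * (diagonal c - diagonal b))
        (u⁻¹ • (diagonal a - diagonal d)) (-(u • (diagonal c - diagonal b))) 1 :
        Matrix (Fin 2 ⊕ Fin 2) (Fin 2 ⊕ Fin 2) ℂ) *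
      fromBlocks 1 (-(u⁻¹ • (diagonal a - diagonal d)))
        (u • (diagonal c - diagonal b))
        (1 - (diagonal c - diagonal b) * (diagonal a - diagonal d)) = 1 := by
    ext (i | i) (j | j) <;> fin_cases i <;> fin_cases j <;>
      simp [Matrix.mul_apply, Fintype.sum_sum_type, Fin.sum_univ_two,
        Matrix.fromBlocks, Matrix.diagonal_apply, Matrix.one_apply,
        Matrix.sub_apply] <;>
      try ring
    all_goals field_simp
    all_goals ring
  have h2 : (fromBlocks 1 (-(u⁻¹ • diagonal d)) 0 1 *
        fromBlocks (1 - diagonal a * diagonal c) (u⁻¹ • diagonal a)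
          (-(u • diagonal c)) 1 *
        fromBlocks 1 0 (u • diagonal b) 1) *
      (fromBlocks 1 (-(u⁻¹ • (diagonal a - diagonal d)))
        (u • (diagonal c - diagonal b))
        (1 - (diagonal c - diagonal b) * (diagonal a - diagonal d)) :
        Matrix (Fin 2 ⊕ Fin 2) (Fin 2 ⊕ Fin 2) ℂ) = 1 := by
    rw [st1, st2, st3]
  exact ⟨hU4, rfl, ⟨⟨_, _, h2, mul_eq_one_comm.mp h2⟩, rfl⟩,
    Matrix.inv_eq_right_inv h2⟩
end

section
/- Let a, ã, b, b̃, a', ã', b', b̃', Ã, B̃ be diagonal 2 × 2 complex matrices (so all of them pairwise commute) and let σ = !![0,1;1,0]. Assume: b̃ * b = ã * a - 1; Ã, a, ã' are invertible; d := a * Ã - b * B̃ is invertible; a * (σ * ã' * σ) + b * (σ * b̃' * σ) is invertible; and the symmetry B̃ * Ã⁻¹ = - σ * b̃' * ã'⁻¹ * σ holds. Define γ̃ = b̃ * a⁻¹ and Γ = B̃ * a⁻¹ * d⁻¹. Then γ̃ - Γ = (b̃ * (σ * ã' * σ) + ã * (σ * b̃' * σ)) * (a * (σ * ã' * σ) +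 b * (σ * b̃' * σ))⁻¹. -/
open Matrix

lemma sig_conj (v : Fin 2 → ℂ) :
    !![(0:ℂ), 1; 1, 0] * diagonal v * !![(0:ℂ), 1; 1, 0] = diagonal ![v 1, v 0] := by
  ext i j
  fin_cases i <;> fin_cases j <;>
    simp [Matrix.mul_apply, Fin.sum_univ_two, Matrix.diagonal, vecHead, vecTail]

lemma unit_diag {v : Fin 2 → ℂ} (h : IsUnit (diagonal v)) : v 0 ≠ 0 ∧ v 1 ≠ 0 := by
  rw [Matrix.isUnit_iff_isUnit_det, Matrix.det_diagonal, Fin.prod_univ_two,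
    isUnit_iff_ne_zero, mul_ne_zero_iff] at h
  exact h

lemma inv_diag {v : Fin 2 → ℂ} (h0 : v 0 ≠ 0) (h1 : v 1 ≠ 0) :
    (diagonal v)⁻¹ = diagonal (fun i => (v i)⁻¹) := by
  apply Matrix.inv_eq_right_inv
  rw [diagonal_mul_diagonal, ← Matrix.diagonal_one]
  refine congrArg diagonal (funext fun i => ?_)
  fin_cases i <;> exact mul_inv_cancel₀ ‹_›


/-- The jump datum γ̃ - Γ depends only on the initial data: identity from the
proof of the paper's main theorem. Here `ta`, `tb` denote ã, b̃, primed letters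
denote evaluation at -k, and `tA`, `tB` denote Ã, B̃. -/
theorem gamma_tilde_sub_Gamma_initial_data
    (a ta b tb a' ta' b' tb' tA tB : Matrix (Fin 2) (Fin 2) ℂ)
    (ha : a.IsDiag) (hta : ta.IsDiag) (hb : b.IsDiag) (htb : tb.IsDiag)
    (ha' : a'.IsDiag) (hta' : ta'.IsDiag) (hb' : b'.IsDiag) (htb' : tb'.IsDiag)
    (htA : tA.IsDiag) (htB : tB.IsDiag)
    (sig : Matrix (Fin 2) (Fin 2) ℂ) (hsig : sig = !![0, 1; 1, 0])
    (hdet : tb * b = ta * a - 1)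
    (hAinv : IsUnit tA) (hainv : IsUnit a) (hta'inv : IsUnit ta')
    (hdinv : IsUnit (a * tA - b * tB))
    (hsum : IsUnit (a * (sig * ta' * sig) + b * (sig * tb' * sig)))
    (hsym : tB * tA⁻¹ = -(sig * tb' * ta'⁻¹ * sig)) :
    tb * a⁻¹ - tB * a⁻¹ * (a * tA - b * tB)⁻¹
      = (tb * (sig * ta' * sig) + ta * (sig * tb' * sig))
        * (a * (sig * ta' * sig) + b * (sig * tb' * sig))⁻¹ := by
  subst hsig
  obtain ⟨va, rfl⟩ : ∃ v, a = diagonal v := ⟨a.diag, ha.diagonal_diag.symm⟩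
  obtain ⟨vta, rfl⟩ : ∃ v, ta = diagonal v := ⟨ta.diag, hta.diagonal_diag.symm⟩
  obtain ⟨vb, rfl⟩ : ∃ v, b = diagonal v := ⟨b.diag, hb.diagonal_diag.symm⟩
  obtain ⟨vtb, rfl⟩ : ∃ v, tb = diagonal v := ⟨tb.diag, htb.diagonal_diag.symm⟩
  obtain ⟨vta', rfl⟩ : ∃ v, ta' = diagonal v := ⟨ta'.diag, hta'.diagonal_diag.symm⟩
  obtain ⟨vtb', rfl⟩ : ∃ v, tb' = diagonal v := ⟨tb'.diag, htb'.diagonal_diag.symm⟩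
  obtain ⟨vtA, rfl⟩ : ∃ v, tA = diagonal v := ⟨tA.diag, htA.diagonal_diag.symm⟩
  obtain ⟨vtB, rfl⟩ : ∃ v, tB = diagonal v := ⟨tB.diag, htB.diagonal_diag.symm⟩
  obtain ⟨hA0, hA1⟩ := unit_diag hAinv
  obtain ⟨ha0, ha1⟩ := unit_diag hainv
  obtain ⟨hta'0, hta'1⟩ := unit_diag hta'inv
  rw [sig_conj, sig_conj] at hsum ⊢
  -- hsym in scalar form
  rw [inv_diag hta'0 hta'1, mul_assoc _ (diagonal vtb'), diagonal_mul_diagonal,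
    sig_conj, inv_diag hA0 hA1, diagonal_mul_diagonal, Matrix.diagonal_neg] at hsym
  replace hsym := Matrix.diagonal_injective hsym
  -- hdet in scalar form
  rw [diagonal_mul_diagonal, diagonal_mul_diagonal, ← Matrix.diagonal_one,
    Matrix.diagonal_sub] at hdet
  replace hdet := Matrix.diagonal_injective hdet
  -- d, s nonzero
  rw [diagonal_mul_diagonal, diagonal_mul_diagonal, Matrix.diagonal_sub] at hdinv
  obtain ⟨hd0, hd1⟩ := unit_diag hdinv
  rw [diagonal_mul_diagonal, diagonal_mul_diagonal, Matrix.diagonal_add] at hsum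
  obtain ⟨hs0, hs1⟩ := unit_diag hsum
  -- rewrite goal into diagonal form
  rw [diagonal_mul_diagonal, diagonal_mul_diagonal, Matrix.diagonal_sub,
    diagonal_mul_diagonal, diagonal_mul_diagonal, Matrix.diagonal_add,
    diagonal_mul_diagonal, diagonal_mul_diagonal, Matrix.diagonal_add,
    inv_diag ha0 ha1, inv_diag hd0 hd1, inv_diag hs0 hs1,
    diagonal_mul_diagonal, diagonal_mul_diagonal, diagonal_mul_diagonal,
    Matrix.diagonal_sub, diagonal_mul_diagonal]
  have hsym0 := congrFun hsym 0
  have hsym1 := congrFun hsym 1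
  have hdet0 := congrFun hdet 0
  have hdet1 := congrFun hdet 1
  simp only [Matrix.cons_val_zero, Matrix.cons_val_one, Matrix.head_cons] at hsym0 hsym1 hs0 hs1
  field_simp at hsym0 hsym1
  refine congrArg diagonal (funext fun i => ?_)
  fin_cases i
  · simp only [Pi.mul_apply, Pi.sub_apply, Pi.add_apply, Pi.one_apply, Fin.zero_eta, Fin.mk_one,
      Matrix.cons_val_zero, Matrix.cons_val_one, Matrix.head_cons, Pi.neg_apply]
    have hd0' : va 0 * vtA 0 - vtB 0 * vb 0 ≠ 0 := by rwa [mul_comm (vtB 0)]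
    field_simp
    linear_combination (vtb' 1 * (va 0 * vtA 0 - vb 0 * vtB 0)) * hdet0
      - va 0 * hsym0
  · simp only [Pi.mul_apply, Pi.sub_apply, Pi.add_apply, Pi.one_apply, Fin.zero_eta, Fin.mk_one,
      Matrix.cons_val_zero, Matrix.cons_val_one, Matrix.head_cons, Pi.neg_apply]
    have hd1' : va 1 * vtA 1 - vtB 1 * vb 1 ≠ 0 := by rwa [mul_comm (vtB 1)]
    field_simp
    linear_combination (vtb' 0 * (va 1 * vtA 1 - vb 1 * vtB 1)) * hdet1
      - va 1 * hsym1
end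

section
/- Let a, b, ã', b̃', Ã, B̃ be diagonal 2 × 2 complex matrices (so all of them pairwise commute) and let σ = !![0,1;1,0]. Assume: Ã, a, ã' are invertible; d := a * Ã - b * B̃ is invertible; a * (σ * ã' * σ) + b * (σ * b̃' * σ) is invertible; and B̃ * Ã⁻¹ = - σ * b̃' * ã'⁻¹ * σ. Then Γ := B̃ * a⁻¹ * d⁻¹ satisfies Γ = - (σ * b̃' * σ) * a⁻¹ * (a * (σ * ã' * σ) + b * (σ * b̃' * σ))⁻¹. -/
open Matrix

private lemma GammaAux.sig_conj (f : Fin 2 → ℂ) :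
    (!![0,1;1,0] : Matrix (Fin 2) (Fin 2) ℂ) * Matrix.diagonal f * !![0,1;1,0]
      = Matrix.diagonal (fun i => f (1 - i)) := by
  ext i j
  simp only [Matrix.mul_apply, Fin.sum_univ_two]
  fin_cases i <;> fin_cases j <;> simp [Matrix.diagonal_apply]

private lemma GammaAux.sig_conj2 (f g : Fin 2 → ℂ) :
    (!![0,1;1,0] : Matrix (Fin 2) (Fin 2) ℂ) * Matrix.diagonal f * Matrix.diagonal g * !![0,1;1,0]
      = Matrix.diagonal (fun i => f (1 - i) * g (1 - i)) := by
  rw [mul_assoc (!![0,1;1,0] : Matrix (Fin 2) (Fin 2) ℂ) (Matrix.diagonal f),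
    Matrix.diagonal_mul_diagonal, GammaAux.sig_conj]

private lemma GammaAux.diag_unit {f : Fin 2 → ℂ} (h : IsUnit (Matrix.diagonal f)) (i : Fin 2) :
    f i ≠ 0 := by
  rw [Matrix.isUnit_iff_isUnit_det, Matrix.det_diagonal, isUnit_iff_ne_zero] at h
  intro hz
  exact h (Finset.prod_eq_zero (Finset.mem_univ i) hz)

private lemma GammaAux.diag_inv {f : Fin 2 → ℂ} (h : ∀ i, f i ≠ 0) :
    (Matrix.diagonal f)⁻¹ = Matrix.diagonal (fun i => (f i)⁻¹) := by
  apply Matrix.inv_eq_right_inv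
  rw [Matrix.diagonal_mul_diagonal,
    show (fun i => f i * (f i)⁻¹) = fun _ => (1 : ℂ) from funext fun i => mul_inv_cancel₀ (h i),
    Matrix.diagonal_one]

/-- The jump datum Γ expressed in terms of initial data only: identity from the
proof of the paper's main theorem. Primed letters denote evaluation at -k, and
`tA`, `tB` denote Ã, B̃. -/
theorem Gamma_initial_data
    (a b ta' tb' tA tB : Matrix (Fin 2) (Fin 2) ℂ)
    (ha : a.IsDiag) (hb : b.IsDiag)
    (hta' : ta'.IsDiag) (htb' : tb'.IsDiag)
    (htA : tA.IsDiag) (htB : tB.IsDiag)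
    (sig : Matrix (Fin 2) (Fin 2) ℂ) (hsig : sig = !![0, 1; 1, 0])
    (hAinv : IsUnit tA) (hainv : IsUnit a) (hta'inv : IsUnit ta')
    (hdinv : IsUnit (a * tA - b * tB))
    (hsum : IsUnit (a * (sig * ta' * sig) + b * (sig * tb' * sig)))
    (hsym : tB * tA⁻¹ = -(sig * tb' * ta'⁻¹ * sig)) :
    tB * a⁻¹ * (a * tA - b * tB)⁻¹
      = -((sig * tb' * sig) * a⁻¹
          * (a * (sig * ta' * sig) + b * (sig * tb' * sig))⁻¹) := by
  obtain ⟨fa, rfl⟩ : ∃ f, Matrix.diagonal f = a := ⟨_, ha.diagonal_diag⟩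
  obtain ⟨fb, rfl⟩ : ∃ f, Matrix.diagonal f = b := ⟨_, hb.diagonal_diag⟩
  obtain ⟨fta, rfl⟩ : ∃ f, Matrix.diagonal f = ta' := ⟨_, hta'.diagonal_diag⟩
  obtain ⟨ftb, rfl⟩ : ∃ f, Matrix.diagonal f = tb' := ⟨_, htb'.diagonal_diag⟩
  obtain ⟨fA, rfl⟩ : ∃ f, Matrix.diagonal f = tA := ⟨_, htA.diagonal_diag⟩
  obtain ⟨fB, rfl⟩ : ∃ f, Matrix.diagonal f = tB := ⟨_, htB.diagonal_diag⟩
  subst hsig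
  have hA := GammaAux.diag_unit hAinv
  have ha0 := GammaAux.diag_unit hainv
  have hta0 := GammaAux.diag_unit hta'inv
  simp only [GammaAux.sig_conj, Matrix.diagonal_mul_diagonal, Matrix.diagonal_sub,
    Matrix.diagonal_add] at hdinv hsum
  have hd0 := GammaAux.diag_unit hdinv
  have hs0 := GammaAux.diag_unit hsum
  rw [GammaAux.diag_inv hta0] at hsym
  rw [GammaAux.diag_inv hA, GammaAux.sig_conj2] at hsym
  simp only [Matrix.diagonal_mul_diagonal] at hsym
  have h1 : ∀ i : Fin 2, fB i * (fA i)⁻¹ = -(ftb (1 - i) * (fta (1 - i))⁻¹) := by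
    intro i
    have := congrFun (congrFun hsym i) i
    simpa [Matrix.diagonal_apply] using this
  rw [GammaAux.diag_inv ha0]
  simp only [GammaAux.sig_conj, Matrix.diagonal_mul_diagonal, Matrix.diagonal_sub,
    Matrix.diagonal_add]
  rw [GammaAux.diag_inv hd0, GammaAux.diag_inv hs0]
  simp only [Matrix.diagonal_mul_diagonal]
  ext i j
  by_cases hij : i = j
  case neg => simp [Matrix.diagonal_apply_ne _ hij, hij]
  subst hij
  simp only [Matrix.diagonal_apply_eq, Matrix.neg_apply]
  have e1 := h1 i
  have hA1 := hA i
  have ha1 := ha0 i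
  have ht1 := hta0 (1 - i)
  have hd1 := hd0 i
  have hs1 := hs0 i
  have e2 : fB i * fta (1 - i) = -(fA i * ftb (1 - i)) := by
    field_simp at e1
    linear_combination e1
  have hd' : (fa i * fA i - fb i * fB i) * (fa i * fA i - fb i * fB i)⁻¹ = 1 := mul_inv_cancel₀ hd1
  have hs' : (fa i * fta (1 - i) + fb i * ftb (1 - i)) * (fa i * fta (1 - i) + fb i * ftb (1 - i))⁻¹ = 1 :=
    mul_inv_cancel₀ hs1
  have hfa' : fa i * (fa i)⁻¹ = 1 := mul_inv_cancel₀ ha1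
  linear_combination ((fa i)⁻¹ * (fa i * fA i - fb i * fB i)⁻¹ * (fa i * fta (1 - i) + fb i * ftb (1 - i))⁻¹ * fa i) * e2
    - (fB i * (fa i)⁻¹ * (fa i * fA i - fb i * fB i)⁻¹) * hs'
    - (ftb (1 - i) * (fa i)⁻¹ * (fa i * fta (1 - i) + fb i * ftb (1 - i))⁻¹) * hd'
end

section
/- Let n ≥ 1. Let Σ be an n × n complex matrix with Σ * Σ = 1 and Σᴴ = Σ, let B be an invertible n × n complex matrix with Bᴴ = b • B for some nonzero b ∈ ℂ, and with B * Σ = μ • (Σ * B) for some μ ∈ ℂ with μ² = 1. Let Y : ℂ → Matrix (Fin n) (Fin n) ℂ be such that Y(k) is invertible and (Y(k))⁻¹ = B * (Y(conj k))ᴴ * B⁻¹ for every k ∈ ℂ. Define S(k) = Σ * (Y(-k))⁻¹ * Σ * Y(k). Then for every k ∈ ℂ, (S(k))⁻¹ = B * (S(conj k))ᴴ * B⁻¹. -/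
open Matrix

/-- Lifting of the half-line Z₂-reduction symmetry to the full-line scattering
matrix S(k) = Σ Y(-k)⁻¹ Σ Y(k): it satisfies S(k)⁻¹ = B S(k̄)ᴴ B⁻¹. -/
theorem scattering_symmetry_reduction_lift
    (n : ℕ) (hn : 1 ≤ n)
    (Sig : Matrix (Fin n) (Fin n) ℂ) (hSig : Sig * Sig = 1) (hSigH : Sigᴴ = Sig)
    (B : Matrix (Fin n) (Fin n) ℂ) (hB : IsUnit B)
    (b : ℂ) (hb : b ≠ 0) (hBH : Bᴴ = b • B)
    (μ : ℂ) (hμ : μ ^ 2 = 1) (hBSig : B * Sig = μ • (Sig * B))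
    (Y : ℂ → Matrix (Fin n) (Fin n) ℂ)
    (hY : ∀ k : ℂ, IsUnit (Y k))
    (hYsym : ∀ k : ℂ, (Y k)⁻¹ = B * (Y (starRingEnd ℂ k))ᴴ * B⁻¹)
    (S : ℂ → Matrix (Fin n) (Fin n) ℂ)
    (hS : ∀ k : ℂ, S k = Sig * (Y (-k))⁻¹ * Sig * Y k) :
    ∀ k : ℂ, (S k)⁻¹ = B * (S (starRingEnd ℂ k))ᴴ * B⁻¹ := by
  intro k
  have hdB : IsUnit B.det := (Matrix.isUnit_iff_isUnit_det B).mp hB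
  have hBB : B * B⁻¹ = 1 := Matrix.mul_nonsing_inv B hdB
  have hBB' : B⁻¹ * B = 1 := Matrix.nonsing_inv_mul B hdB
  have hdY : ∀ k : ℂ, IsUnit (Y k).det :=
    fun k => (Matrix.isUnit_iff_isUnit_det _).mp (hY k)
  have hYY : ∀ k : ℂ, Y k * (Y k)⁻¹ = 1 := fun k => Matrix.mul_nonsing_inv _ (hdY k)
  have hYY' : ∀ k : ℂ, (Y k)⁻¹ * Y k = 1 := fun k => Matrix.nonsing_inv_mul _ (hdY k)
  have hμ' : μ * μ = 1 := by rw [← sq]; exact hμ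
  -- cancellation helpers
  have cB1 : ∀ X, B * (B⁻¹ * X) = X := fun X => by
    rw [← Matrix.mul_assoc, hBB, Matrix.one_mul]
  have cB2 : ∀ X, B⁻¹ * (B * X) = X := fun X => by
    rw [← Matrix.mul_assoc, hBB', Matrix.one_mul]
  have cS : ∀ X, Sig * (Sig * X) = X := fun X => by
    rw [← Matrix.mul_assoc, hSig, Matrix.one_mul]
  have cY1 : ∀ j X, Y j * ((Y j)⁻¹ * X) = X := fun j X => by
    rw [← Matrix.mul_assoc, hYY, Matrix.one_mul]
  have cY2 : ∀ j X, (Y j)⁻¹ * (Y j * X) = X := fun j X => by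
    rw [← Matrix.mul_assoc, hYY', Matrix.one_mul]
  have hmove : ∀ X, B * (Sig * X) = μ • (Sig * (B * X)) := fun X => by
    rw [← Matrix.mul_assoc, hBSig, Matrix.smul_mul, Matrix.mul_assoc]
  -- express conjugate-transposes via the symmetry
  have h1 : (Y (starRingEnd ℂ k))ᴴ = B⁻¹ * (Y k)⁻¹ * B := by
    have := hYsym k
    rw [this]
    simp only [Matrix.mul_assoc, cB2, hBB', Matrix.mul_one]
  have h2 : (Y (-(starRingEnd ℂ k)))ᴴ = B⁻¹ * (Y (-k))⁻¹ * B := by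
    have := hYsym (-k)
    rw [map_neg] at this
    rw [this]
    simp only [Matrix.mul_assoc, cB2, hBB', Matrix.mul_one]
  have h2inv : ((Y (-(starRingEnd ℂ k)))⁻¹)ᴴ = B⁻¹ * Y (-k) * B := by
    rw [Matrix.conjTranspose_nonsing_inv, h2, Matrix.mul_inv_rev, Matrix.mul_inv_rev,
      Matrix.nonsing_inv_nonsing_inv _ (hdY (-k)), Matrix.nonsing_inv_nonsing_inv _ hdB,
      Matrix.mul_assoc]
  have key : S k * (B * (S (starRingEnd ℂ k))ᴴ * B⁻¹) = 1 := by
    rw [hS k, hS (starRingEnd ℂ k)]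
    simp only [Matrix.conjTranspose_mul, hSigH, h1, h2inv, Matrix.mul_assoc,
      Matrix.mul_smul, Matrix.smul_mul, smul_smul, hμ', one_smul,
      cB1, cB2, cS, cY1, cY2, hmove, hBB, hBB', hSig, hYY, hYY',
      Matrix.mul_one, Matrix.one_mul]
  have := Matrix.inv_eq_right_inv key
  rw [this, Matrix.mul_assoc]
end

section
/- Let ρ⁺, ρ⁻ be nonzero real numbers, μ ∈ {1, -1}, and let B be the 4 × 4 diagonal complex matrix with diagonal entries (ρ⁺, μρ⁺, ρ⁻, μρ⁻). Let Σ be the 4 × 4 matrix whose only nonzero entries are Σ₀₁ = Σ₁₀ = Σ₂₃ = Σ₃₂ = 1. Let S : ℂ → Matrix (Fin 4) (Fin 4) ℂ satisfy, for all k ∈ ℂ: (i) S(k)ᵢⱼ = 0 whenever i and j have different parity; (ii) S(k)₀₀ S(k)₂₂ - S(k)₀₂ S(k)₂₀ = 1 and S(k)₁₁ S(k)₃₃ - S(k)₁₃ S(k)₃₁ = 1; (iii) S(k) * (Σ * S(-k) * Σ) = 1; (iv) S(k) * (B * (S(conj k))ᴴ * B⁻¹) = 1. Then, writing a(k) = S(k)₂₂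 and b(k) = S(k)₀₂, for all k ∈ ℂ: S(k)₀₀ = conj(a(conj k)), S(k)₁₁ = a(-k), S(k)₃₃ = conj(a(-conj k)), S(k)₁₃ = -b(-k), S(k)₂₀ = -(ρ⁻/ρ⁺) · conj(b(conj k)), and S(k)₃₁ = (ρ⁻/ρ⁺) · conj(b(-conj k)). -/
open Matrix

/-- Solve a 2×2 linear system: if M has determinant 1 and M·(D·N) = D
(written entrywise with diagonal weights α, β), then N is determined by M. -/
lemma nls_key2 (α β a b c d p q r s : ℂ) (hα : α ≠ 0) (hβ : β ≠ 0)
    (hdet : a * d - b * c = 1)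
    (h1 : a * (α * p) + b * (β * r) = α)
    (h2 : a * (α * q) + b * (β * s) = 0)
    (h3 : c * (α * p) + d * (β * r) = 0)
    (h4 : c * (α * q) + d * (β * s) = β) :
    p = d ∧ α * q = -(β * b) ∧ β * r = -(α * c) ∧ s = a := by
  refine ⟨?_, ?_, ?_, ?_⟩
  · have h : α * p = α * d := by linear_combination d * h1 - b * h3 - α * p * hdet
    exact mul_left_cancel₀ hα h
  · linear_combination d * h2 - b * h4 - α * q * hdet
  · linear_combination a * h3 - c * h1 - β * r * hdet
  · have h : β * s = β * a := by linear_combination a * h4 - c * h2 - β * s * hdet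
    exact mul_left_cancel₀ hβ h

/-- γ = 1 case of the final proposition: under the diagonal Z₂ reduction (NLS
case) the 4×4 full-line scattering matrix reduces to the two coefficients
a(k) = S(k)₂₂ and b(k) = S(k)₀₂ with the standard NLS symmetry pattern. -/
theorem nls_scattering_reduction
    (ρp ρm : ℝ) (hρp : ρp ≠ 0) (hρm : ρm ≠ 0)
    (μ : ℂ) (hμ : μ = 1 ∨ μ = -1)
    (B Sig : Matrix (Fin 4) (Fin 4) ℂ)
    (hB : B = Matrix.diagonal ![(ρp : ℂ), μ * (ρp : ℂ), (ρm : ℂ), μ * (ρm : ℂ)])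
    (hSig : Sig = !![0, 1, 0, 0; 1, 0, 0, 0; 0, 0, 0, 1; 0, 0, 1, 0])
    (S : ℂ → Matrix (Fin 4) (Fin 4) ℂ)
    (hsparse : ∀ (k : ℂ) (i j : Fin 4), (i : ℕ) % 2 ≠ (j : ℕ) % 2 → S k i j = 0)
    (hdet1 : ∀ k : ℂ, S k 0 0 * S k 2 2 - S k 0 2 * S k 2 0 = 1)
    (hdet2 : ∀ k : ℂ, S k 1 1 * S k 3 3 - S k 1 3 * S k 3 1 = 1)
    (hsym1 : ∀ k : ℂ, S k * (Sig * S (-k) * Sig) = 1)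
    (hsym2 : ∀ k : ℂ, S k * (B * (S (starRingEnd ℂ k))ᴴ * B⁻¹) = 1) :
    ∀ k : ℂ,
      S k 0 0 = starRingEnd ℂ (S (starRingEnd ℂ k) 2 2)
        ∧ S k 1 1 = S (-k) 2 2
        ∧ S k 3 3 = starRingEnd ℂ (S (-(starRingEnd ℂ k)) 2 2)
        ∧ S k 1 3 = -(S (-k) 0 2)
        ∧ S k 2 0 = -(((ρm / ρp : ℝ) : ℂ) * starRingEnd ℂ (S (starRingEnd ℂ k) 0 2))
        ∧ S k 3 1 = ((ρm / ρp : ℝ) : ℂ) * starRingEnd ℂ (S (-(starRingEnd ℂ k)) 0 2) := by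
  have hμ0 : μ ≠ 0 := by rcases hμ with h | h <;> simp [h]
  have hρpC : (ρp : ℂ) ≠ 0 := Complex.ofReal_ne_zero.mpr hρp
  have hρmC : (ρm : ℂ) ≠ 0 := Complex.ofReal_ne_zero.mpr hρm
  -- sparsity zeros
  have z01 : ∀ k, S k 0 1 = 0 := fun k => hsparse k 0 1 (by decide)
  have z03 : ∀ k, S k 0 3 = 0 := fun k => hsparse k 0 3 (by decide)
  have z10 : ∀ k, S k 1 0 = 0 := fun k => hsparse k 1 0 (by decide)
  have z12 : ∀ k, S k 1 2 = 0 := fun k => hsparse k 1 2 (by decide)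
  have z21 : ∀ k, S k 2 1 = 0 := fun k => hsparse k 2 1 (by decide)
  have z23 : ∀ k, S k 2 3 = 0 := fun k => hsparse k 2 3 (by decide)
  have z30 : ∀ k, S k 3 0 = 0 := fun k => hsparse k 3 0 (by decide)
  have z32 : ∀ k, S k 3 2 = 0 := fun k => hsparse k 3 2 (by decide)
  -- B is invertible
  have hdetB : IsUnit B.det := by
    rw [hB, Matrix.det_diagonal, Fin.prod_univ_four]
    simp only [Matrix.cons_val_zero, Matrix.cons_val_one, Matrix.head_cons,
      Matrix.cons_val_two, Matrix.tail_cons, Matrix.cons_val_three]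
    exact (mul_ne_zero (mul_ne_zero (mul_ne_zero hρpC (mul_ne_zero hμ0 hρpC)) hρmC)
      (mul_ne_zero hμ0 hρmC)).isUnit
  -- rewrite hsym2 without the inverse
  have hsym2' : ∀ k : ℂ, S k * (B * (S (starRingEnd ℂ k))ᴴ) = B := by
    intro k
    have h := hsym2 k
    calc S k * (B * (S (starRingEnd ℂ k))ᴴ)
        = S k * (B * (S (starRingEnd ℂ k))ᴴ * B⁻¹) * B := by
          rw [mul_assoc (S k), mul_assoc (B * (S (starRingEnd ℂ k))ᴴ),
            Matrix.nonsing_inv_mul B hdetB, mul_one]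
      _ = B := by rw [h, one_mul]
  -- even block of hsym1 : inverse relations
  have E : ∀ k : ℂ, S (-k) 1 1 = S k 2 2 ∧ S (-k) 1 3 = -(S k 0 2)
      ∧ S (-k) 3 1 = -(S k 2 0) ∧ S (-k) 3 3 = S k 0 0 := by
    intro k
    have e00 := congrFun (congrFun (hsym1 k) 0) 0
    have e02 := congrFun (congrFun (hsym1 k) 0) 2
    have e20 := congrFun (congrFun (hsym1 k) 2) 0
    have e22 := congrFun (congrFun (hsym1 k) 2) 2
    simp only [hSig, Matrix.mul_apply, Fin.sum_univ_four, Matrix.one_apply,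
      Matrix.cons_val', Matrix.cons_val_zero, Matrix.cons_val_one, Matrix.head_cons,
      Matrix.empty_val', Matrix.cons_val_fin_one, Matrix.cons_val_two, Matrix.tail_cons,
      Matrix.cons_val_three, Matrix.head_fin_const, Matrix.of_apply,
      z01, z03, z10, z12, z21, z23, z30, z32,
      mul_zero, zero_mul, add_zero, zero_add, mul_one, one_mul,
      if_true, if_false, Fin.reduceEq, reduceIte] at e00 e02 e20 e22
    obtain ⟨h1, h2, h3, h4⟩ := nls_key2 1 1 (S k 0 0) (S k 0 2) (S k 2 0) (S k 2 2)
      (S (-k) 1 1) (S (-k) 1 3) (S (-k) 3 1) (S (-k) 3 3) one_ne_zero one_ne_zero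
      (hdet1 k) (by linear_combination e00) (by linear_combination e02)
      (by linear_combination e20) (by linear_combination e22)
    exact ⟨h1, by linear_combination h2, by linear_combination h3, h4⟩
  -- even block of hsym2' : conjugation relations
  have F : ∀ k : ℂ, starRingEnd ℂ (S (starRingEnd ℂ k) 0 0) = S k 2 2
      ∧ (ρm : ℂ) * starRingEnd ℂ (S (starRingEnd ℂ k) 0 2) = -((ρp : ℂ) * S k 2 0)
      ∧ starRingEnd ℂ (S (starRingEnd ℂ k) 2 2) = S k 0 0 := by
    intro k
    have e00 := congrFun (congrFun (hsym2' k) 0) 0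
    have e02 := congrFun (congrFun (hsym2' k) 0) 2
    have e20 := congrFun (congrFun (hsym2' k) 2) 0
    have e22 := congrFun (congrFun (hsym2' k) 2) 2
    simp only [hB, Matrix.mul_apply, Fin.sum_univ_four, Matrix.diagonal_apply,
      Matrix.conjTranspose_apply, Complex.star_def, Matrix.cons_val_zero, Matrix.cons_val_one,
      Matrix.head_cons, Matrix.cons_val_two, Matrix.tail_cons, Matrix.cons_val_three,
      z01, z03, z10, z12, z21, z23, z30, z32, map_zero,
      mul_zero, zero_mul, add_zero, zero_add, if_true, if_false,
      Fin.isValue, ite_true, ite_false, Fin.reduceEq, reduceIte] at e00 e02 e20 e22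
    obtain ⟨h1, h2, h3, h4⟩ := nls_key2 (ρp : ℂ) (ρm : ℂ)
      (S k 0 0) (S k 0 2) (S k 2 0) (S k 2 2)
      (starRingEnd ℂ (S (starRingEnd ℂ k) 0 0)) (starRingEnd ℂ (S (starRingEnd ℂ k) 2 0))
      (starRingEnd ℂ (S (starRingEnd ℂ k) 0 2)) (starRingEnd ℂ (S (starRingEnd ℂ k) 2 2))
      hρpC hρmC (hdet1 k) (by linear_combination e00) (by linear_combination e02)
      (by linear_combination e20) (by linear_combination e22)
    exact ⟨h1, by linear_combination h3, h4⟩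
  -- odd block of hsym2' : conjugation relations
  have G : ∀ k : ℂ, (ρm : ℂ) * starRingEnd ℂ (S (starRingEnd ℂ k) 1 3)
      = -((ρp : ℂ) * S k 3 1) := by
    intro k
    have e11 := congrFun (congrFun (hsym2' k) 1) 1
    have e13 := congrFun (congrFun (hsym2' k) 1) 3
    have e31 := congrFun (congrFun (hsym2' k) 3) 1
    have e33 := congrFun (congrFun (hsym2' k) 3) 3
    simp only [hB, Matrix.mul_apply, Fin.sum_univ_four, Matrix.diagonal_apply,
      Matrix.conjTranspose_apply, Complex.star_def, Matrix.cons_val_zero, Matrix.cons_val_one,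
      Matrix.head_cons, Matrix.cons_val_two, Matrix.tail_cons, Matrix.cons_val_three,
      z01, z03, z10, z12, z21, z23, z30, z32, map_zero,
      mul_zero, zero_mul, add_zero, zero_add, if_true, if_false,
      Fin.isValue, ite_true, ite_false, Fin.reduceEq, reduceIte] at e11 e13 e31 e33
    obtain ⟨h1, h2, h3, h4⟩ := nls_key2 (μ * ρp) (μ * ρm)
      (S k 1 1) (S k 1 3) (S k 3 1) (S k 3 3)
      (starRingEnd ℂ (S (starRingEnd ℂ k) 1 1)) (starRingEnd ℂ (S (starRingEnd ℂ k) 3 1))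
      (starRingEnd ℂ (S (starRingEnd ℂ k) 1 3)) (starRingEnd ℂ (S (starRingEnd ℂ k) 3 3))
      (mul_ne_zero hμ0 hρpC) (mul_ne_zero hμ0 hρmC) (hdet2 k)
      (by linear_combination e11) (by linear_combination e13)
      (by linear_combination e31) (by linear_combination e33)
    -- h3 : μ*ρm * conj(S k̄ 1 3) = -(μ*ρp * S k 3 1); cancel μ
    exact mul_left_cancel₀ hμ0 (by linear_combination h3)
  -- the six goals
  intro k
  have hkk : starRingEnd ℂ (starRingEnd ℂ k) = k := Complex.conj_conj k
  refine ⟨?_, ?_, ?_, ?_, ?_, ?_⟩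
  · exact ((F k).2.2).symm
  · have := (E (-k)).1; rwa [neg_neg] at this
  · have h1 : S k 3 3 = S (-k) 0 0 := by
      have := (E (-k)).2.2.2; rwa [neg_neg] at this
    have h2 := ((F (-k)).2.2).symm
    rw [h1, h2, map_neg]
  · have := (E (-k)).2.1; rwa [neg_neg] at this
  · have h := (F k).2.1
    push_cast
    field_simp
    linear_combination h
  · have h := G k
    have h13 : S (starRingEnd ℂ k) 1 3 = -(S (-(starRingEnd ℂ k)) 0 2) := by
      have := (E (-(starRingEnd ℂ k))).2.1; rwa [neg_neg] at this
    rw [h13, map_neg] at h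
    push_cast
    field_simp
    linear_combination h
end

section
/- Let β⁺, β⁻ be nonzero complex numbers, μ ∈ {1, -1}, and let B be the 4 × 4 complex matrix whose only nonzero entries are B₀₁ = β⁺, B₁₀ = μβ⁺, B₂₃ = β⁻, B₃₂ = μβ⁻. Let Σ be the 4 × 4 matrix whose only nonzero entries are Σ₀₁ = Σ₁₀ = Σ₂₃ = Σ₃₂ = 1. Let S : ℂ → Matrix (Fin 4) (Fin 4) ℂ satisfy, for all k ∈ ℂ: (i) S(k)ᵢⱼ = 0 whenever i and j have different parity; (ii) S(k)₀₀ S(k)₂₂ - S(k)₀₂ S(k)₂₀ = 1 and S(k)₁₁ S(k)₃₃ - S(k)₁₃ S(k)₃₁ = 1; (iii) S(k) * (Σ * S(-k) * Σ) = 1; (iv) S(k) * (B * (S(conj k))ᴴ * B⁻¹) = 1. Then, writing ã(k) = S(k)₀₀, a(k) = S(k)₂₂ and b(k) = S(k)₀₂, for all k ∈ ℂ: S(k)₁₁ = a(-k), S(k)₃₃ = ã(-k), S(k)₁₃ = -b(-k), S(k)₂₀ = (β⁻/β⁺) · conj(b(-conj k)), S(k)₃₁ = -(β⁻/β⁺)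 · conj(b(conj k)), and in addition a(k) = conj(a(-conj k)) and ã(k) = conj(ã(-conj k)). -/
open Matrix

set_option maxHeartbeats 2000000 in
/-- γ = -1 case of the final proposition: under the off-diagonal Z₂ reduction
(nonlocal NLS case) the 4×4 full-line scattering matrix reduces to the three
coefficients ã(k) = S(k)₀₀, a(k) = S(k)₂₂ and b(k) = S(k)₀₂ carrying the
Ablowitz–Musslimani nonlocal NLS symmetries. -/
theorem nonlocal_nls_scattering_reduction
    (βp βm : ℂ) (hβp : βp ≠ 0) (hβm : βm ≠ 0)
    (μ : ℂ) (hμ : μ = 1 ∨ μ = -1)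
    (B Sig : Matrix (Fin 4) (Fin 4) ℂ)
    (hB : B = !![0, βp, 0, 0; μ * βp, 0, 0, 0; 0, 0, 0, βm; 0, 0, μ * βm, 0])
    (hSig : Sig = !![0, 1, 0, 0; 1, 0, 0, 0; 0, 0, 0, 1; 0, 0, 1, 0])
    (S : ℂ → Matrix (Fin 4) (Fin 4) ℂ)
    (hsparse : ∀ (k : ℂ) (i j : Fin 4), (i : ℕ) % 2 ≠ (j : ℕ) % 2 → S k i j = 0)
    (hdet1 : ∀ k : ℂ, S k 0 0 * S k 2 2 - S k 0 2 * S k 2 0 = 1)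
    (hdet2 : ∀ k : ℂ, S k 1 1 * S k 3 3 - S k 1 3 * S k 3 1 = 1)
    (hsym1 : ∀ k : ℂ, S k * (Sig * S (-k) * Sig) = 1)
    (hsym2 : ∀ k : ℂ, S k * (B * (S (starRingEnd ℂ k))ᴴ * B⁻¹) = 1) :
    ∀ k : ℂ,
      S k 1 1 = S (-k) 2 2
        ∧ S k 3 3 = S (-k) 0 0
        ∧ S k 1 3 = -(S (-k) 0 2)
        ∧ S k 2 0 = (βm / βp) * starRingEnd ℂ (S (-(starRingEnd ℂ k)) 0 2)
        ∧ S k 3 1 = -((βm / βp) * starRingEnd ℂ (S (starRingEnd ℂ k) 0 2))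
        ∧ S k 2 2 = starRingEnd ℂ (S (-(starRingEnd ℂ k)) 2 2)
        ∧ S k 0 0 = starRingEnd ℂ (S (-(starRingEnd ℂ k)) 0 0) := by
  have hμ0 : μ ≠ 0 := by rcases hμ with h | h <;> subst h <;> norm_num
  -- explicit inverse of B
  have hBinv : B⁻¹ =
      !![0, (μ*βp)⁻¹, 0, 0; βp⁻¹, 0, 0, 0; 0, 0, 0, (μ*βm)⁻¹; 0, 0, βm⁻¹, 0] := by
    apply Matrix.inv_eq_right_inv
    subst hB
    ext i j
    fin_cases i <;> fin_cases j <;>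
      simp [Matrix.mul_apply, Fin.sum_univ_four, Matrix.one_apply,
        Matrix.vecHead, Matrix.vecTail] <;>
      field_simp <;> ring
  -- consequences of the Σ symmetry (even block)
  have P : ∀ k : ℂ, S (-k) 1 1 = S k 2 2 ∧ S (-k) 3 1 = -(S k 2 0)
      ∧ S (-k) 1 3 = -(S k 0 2) ∧ S (-k) 3 3 = S k 0 0 := by
    intro k
    have h2 := hsym1 k
    rw [hSig] at h2
    have e00 := congrFun (congrFun h2 0) 0
    have e02 := congrFun (congrFun h2 0) 2
    have e20 := congrFun (congrFun h2 2) 0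
    have e22 := congrFun (congrFun h2 2) 2
    simp [Matrix.mul_apply, Fin.sum_univ_four, Matrix.one_apply,
      Matrix.vecMul, dotProduct, Matrix.vecHead, Matrix.vecTail,
      hsparse k 0 1 (by decide), hsparse k 0 3 (by decide),
      hsparse k 2 1 (by decide), hsparse k 2 3 (by decide)] at e00 e02 e20 e22
    refine ⟨?_, ?_, ?_, ?_⟩
    · linear_combination S k 2 2 * e00 - S k 0 2 * e20 - S (-k) 1 1 * hdet1 k
    · linear_combination (-(S k 2 0)) * e00 + S k 0 0 * e20 - S (-k) 3 1 * hdet1 k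
    · linear_combination S k 2 2 * e02 - S k 0 2 * e22 - S (-k) 1 3 * hdet1 k
    · linear_combination (-(S k 2 0)) * e02 + S k 0 0 * e22 - S (-k) 3 3 * hdet1 k
  -- consequences of the B symmetry
  have Q : ∀ k : ℂ,
      starRingEnd ℂ (S (starRingEnd ℂ k) 1 1) = S k 2 2
      ∧ βm * starRingEnd ℂ (S (starRingEnd ℂ k) 1 3) = -(βp * S k 2 0)
      ∧ starRingEnd ℂ (S (starRingEnd ℂ k) 3 3) = S k 0 0
      ∧ βm * starRingEnd ℂ (S (starRingEnd ℂ k) 0 2) = -(βp * S k 3 1) := by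
    intro k
    have h2 := hsym2 k
    rw [hBinv, hB] at h2
    have h00 := congrFun (congrFun h2 0) 0
    have h02 := congrFun (congrFun h2 0) 2
    have h20 := congrFun (congrFun h2 2) 0
    have h22 := congrFun (congrFun h2 2) 2
    have h11 := congrFun (congrFun h2 1) 1
    have h31 := congrFun (congrFun h2 3) 1
    simp [Matrix.mul_apply, Fin.sum_univ_four, Matrix.one_apply,
      Matrix.vecMul, dotProduct, Matrix.vecHead, Matrix.vecTail,
      Matrix.conjTranspose_apply,
      hsparse k 0 1 (by decide), hsparse k 0 3 (by decide),
      hsparse k 2 1 (by decide), hsparse k 2 3 (by decide),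
      hsparse k 1 0 (by decide), hsparse k 1 2 (by decide),
      hsparse k 3 0 (by decide), hsparse k 3 2 (by decide)] at h00 h02 h20 h22 h11 h31
    field_simp at h00
    field_simp at h02
    field_simp at h20
    field_simp at h22
    field_simp at h11
    field_simp at h31
    refine ⟨?_, ?_, ?_, ?_⟩
    · apply mul_left_cancel₀ hβp
      linear_combination S k 2 2 * h00 - S k 0 2 * h20
        - (βp * starRingEnd ℂ (S (starRingEnd ℂ k) 1 1)) * hdet1 k
    · linear_combination (-(S k 2 0)) * h00 + S k 0 0 * h20
        - (βm * starRingEnd ℂ (S (starRingEnd ℂ k) 1 3)) * hdet1 k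
    · apply mul_left_cancel₀ hβm
      linear_combination (-(S k 2 0)) * h02 + S k 0 0 * h22
        - (βm * starRingEnd ℂ (S (starRingEnd ℂ k) 3 3)) * hdet1 k
    · apply mul_left_cancel₀ hμ0
      linear_combination μ * ((-(S k 3 1)) * h11 + S k 1 1 * h31)
        - (μ * (βm * starRingEnd ℂ (S (starRingEnd ℂ k) 0 2))) * hdet2 k
  intro k
  set κ := starRingEnd ℂ k with hκ
  have g1 : S k 1 1 = S (-k) 2 2 := by
    have h := (P (-k)).1; rwa [neg_neg] at h
  have g2 : S k 3 3 = S (-k) 0 0 := by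
    have h := (P (-k)).2.2.2; rwa [neg_neg] at h
  have g3 : S k 1 3 = -(S (-k) 0 2) := by
    have h := (P (-k)).2.2.1; rwa [neg_neg] at h
  have g4 : S k 2 0 = (βm / βp) * starRingEnd ℂ (S (-κ) 0 2) := by
    have hq := (Q k).2.1
    have h3k : S κ 1 3 = -(S (-κ) 0 2) := by
      have h := (P (-κ)).2.2.1; rwa [neg_neg] at h
    have h3c : starRingEnd ℂ (S κ 1 3) = -(starRingEnd ℂ (S (-κ) 0 2)) := by
      rw [h3k, map_neg]
    field_simp
    linear_combination hq - βm * h3c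
  have g5 : S k 3 1 = -((βm / βp) * starRingEnd ℂ (S κ 0 2)) := by
    have hq := (Q k).2.2.2
    rw [← hκ] at hq
    field_simp
    linear_combination hq
  have g6 : S k 2 2 = starRingEnd ℂ (S (-κ) 2 2) := by
    have hq := (Q k).1
    have hp : S κ 1 1 = S (-κ) 2 2 := by
      have h := (P (-κ)).1; rwa [neg_neg] at h
    rw [← hq, hp]
  have g7 : S k 0 0 = starRingEnd ℂ (S (-κ) 0 0) := by
    have hq := (Q k).2.2.1
    have hp : S κ 3 3 = S (-κ) 0 0 := by
      have h := (P (-κ)).2.2.2; rwa [neg_neg] at h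
    rw [← hq, hp]
  exact ⟨g1, g2, g3, g4, g5, g6, g7⟩
end
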